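/- arXiv:1502.00399 — 3 statements merged into one kernel-verified Lean document; each statement's English description precedes it below -/
import Mathlib

section
/- Let m be a probability measure on (S,ℬ) and let T be the transition operator Tμ(A) = ∫_{A×S} k(x,y) m(dx) μ(dy) with nonnegative measurable kernel k whose marginals make T a transition operator. If k(x,y) ≥ g(x) for all x,y with g ≥ 0 measurable, then the Dobrushin coefficient satisfies δ(T) ≤ 1 - ∫_S g dm. In particular if g is not a.e. zero then δ(T) < 1 and T has a unique fixed probability measure attracting all probability measures exponentially fast in total variation. -/
open MeasureTheory

variable {S : Type*} [MeasurableSpace S]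

/-- Total variation norm of a finite signed measure. -/
noncomputable def tvNorm (μ : SignedMeasure S) : ℝ :=
  (μ.totalVariation Set.univ).toReal

/-- A signed measure which is a probability measure. -/
def IsProbSM (μ : SignedMeasure S) : Prop :=
  (∀ A : Set S, MeasurableSet A → 0 ≤ μ A) ∧ μ Set.univ = 1

/-- A transition operator: a linear map on finite signed measures that maps positive
measures to positive measures isometrically (in total variation). -/
def IsTransitionOp (T : SignedMeasure S →ₗ[ℝ] SignedMeasure S) : Prop :=
  (∃ C : ℝ, ∀ μ : SignedMeasure S, tvNorm (T μ) ≤ C * tvNorm μ) ∧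
  ∀ μ : SignedMeasure S, (∀ A : Set S, MeasurableSet A → 0 ≤ μ A) →
    (∀ A : Set S, MeasurableSet A → 0 ≤ (T μ) A) ∧ tvNorm (T μ) = tvNorm μ

/-- The Dobrushin coefficient of ergodicity. -/
noncomputable def dobrushin (T : SignedMeasure S →ₗ[ℝ] SignedMeasure S) : ℝ :=
  sSup {r : ℝ | ∃ μ₁ μ₂ : SignedMeasure S, IsProbSM μ₁ ∧ IsProbSM μ₂ ∧ μ₁ ≠ μ₂ ∧
    r = tvNorm (T μ₁ - T μ₂) / tvNorm (μ₁ - μ₂)}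

lemma jordan_apply (ν : SignedMeasure S) {A : Set S} (hA : MeasurableSet A) :
    ν A = (ν.toJordanDecomposition.posPart A).toReal
      - (ν.toJordanDecomposition.negPart A).toReal := by
  conv_lhs => rw [← ν.toSignedMeasure_toJordanDecomposition]
  rw [JordanDecomposition.toSignedMeasure, VectorMeasure.sub_apply,
    Measure.toSignedMeasure_apply_measurable hA, Measure.toSignedMeasure_apply_measurable hA]
  rfl

lemma tvNorm_eq (ν : SignedMeasure S) :
    tvNorm ν = (ν.toJordanDecomposition.posPart Set.univ).toReal
      + (ν.toJordanDecomposition.negPart Set.univ).toReal := by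
  rw [tvNorm, SignedMeasure.totalVariation, Measure.add_apply,
    ENNReal.toReal_add (measure_ne_top _ _) (measure_ne_top _ _)]

lemma tvNorm_nonneg (ν : SignedMeasure S) : 0 ≤ tvNorm ν := ENNReal.toReal_nonneg

lemma tvNorm_neg (ν : SignedMeasure S) : tvNorm (-ν) = tvNorm ν := by
  rw [tvNorm, tvNorm, SignedMeasure.totalVariation_neg]

lemma tv_toSM (ρ : Measure S) [IsFiniteMeasure ρ] :
    (ρ.toSignedMeasure).totalVariation = ρ := by
  have h : ρ.toSignedMeasure =
      (⟨ρ, 0, Measure.MutuallySingular.zero_right⟩ :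
        JordanDecomposition S).toSignedMeasure := by
    rw [JordanDecomposition.toSignedMeasure]
    simp [Measure.toSignedMeasure_zero]
  rw [SignedMeasure.totalVariation, SignedMeasure.toJordanDecomposition_eq h]
  simp

lemma smNegPartZero (ν : SignedMeasure S) (hν : ∀ A : Set S, MeasurableSet A → 0 ≤ ν A) :
    ν.toJordanDecomposition.negPart = 0 := by
  obtain ⟨u, hu, hpu, hqu⟩ := ν.toJordanDecomposition.mutuallySingular
  ext A hA
  simp only [Measure.coe_zero, Pi.zero_apply]
  have h1 : ν.toJordanDecomposition.negPart (A ∩ u) = 0 := by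
    have hmeas := hA.inter hu
    have hp : ν.toJordanDecomposition.posPart (A ∩ u) = 0 :=
      measure_mono_null Set.inter_subset_right hpu
    have := jordan_apply ν hmeas
    rw [hp] at this
    have h0 := hν _ hmeas
    rw [this] at h0
    simp only [ENNReal.toReal_zero, zero_sub, Left.nonneg_neg_iff] at h0
    have := le_antisymm h0 ENNReal.toReal_nonneg
    rwa [ENNReal.toReal_eq_zero_iff, or_iff_left (measure_ne_top _ _)] at this
  have h2 : ν.toJordanDecomposition.negPart (A \ u) = 0 :=
    measure_mono_null (Set.diff_subset_compl A u) hqu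
  refine le_antisymm ?_ zero_le
  calc ν.toJordanDecomposition.negPart A
        ≤ ν.toJordanDecomposition.negPart (A ∩ u) + ν.toJordanDecomposition.negPart (A \ u) :=
          (measure_mono (by simp [Set.inter_union_diff])).trans (measure_union_le _ _)
      _ = 0 := by rw [h1, h2, add_zero]

lemma tv_of_nonneg (ν : SignedMeasure S) (hν : ∀ A : Set S, MeasurableSet A → 0 ≤ ν A) :
    ν.totalVariation = ν.toJordanDecomposition.posPart := by
  rw [SignedMeasure.totalVariation, smNegPartZero ν hν, add_zero]

lemma apply_of_nonneg {ν : SignedMeasure S} (hν : ∀ A : Set S, MeasurableSet A → 0 ≤ ν A)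
    {A : Set S} (hA : MeasurableSet A) :
    ν A = (ν.toJordanDecomposition.posPart A).toReal := by
  rw [jordan_apply ν hA, smNegPartZero ν hν]; simp

lemma tvNorm_of_nonneg {ν : SignedMeasure S} (hν : ∀ A : Set S, MeasurableSet A → 0 ≤ ν A) :
    tvNorm ν = ν Set.univ := by
  rw [tvNorm, tv_of_nonneg ν hν, apply_of_nonneg hν MeasurableSet.univ]

lemma tvNorm_zero : tvNorm (0 : SignedMeasure S) = 0 := by
  rw [tvNorm, SignedMeasure.totalVariation_zero]; simp

lemma eq_zero_of_tvNorm_zero {ν : SignedMeasure S} (h : tvNorm ν = 0) : ν = 0 := by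
  haveI : IsFiniteMeasure ν.totalVariation := by
    rw [SignedMeasure.totalVariation]; infer_instance
  have h0 : ν.totalVariation Set.univ = 0 := by
    rw [tvNorm] at h
    rwa [ENNReal.toReal_eq_zero_iff, or_iff_left (measure_ne_top _ _)] at h
  ext A hA
  have hA0 : ν.totalVariation A = 0 :=
    le_antisymm (h0 ▸ measure_mono (Set.subset_univ A)) zero_le
  simpa using SignedMeasure.null_of_totalVariation_zero ν hA0

lemma tvNorm_le_of_eq_sub (ν : SignedMeasure S) (a b : Measure S)
    [IsFiniteMeasure a] [IsFiniteMeasure b]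
    (h : ν = a.toSignedMeasure - b.toSignedMeasure) :
    tvNorm ν ≤ (a Set.univ).toReal + (b Set.univ).toReal := by
  obtain ⟨u, hu, hpu, hqu⟩ := ν.toJordanDecomposition.mutuallySingular
  set p := ν.toJordanDecomposition.posPart with hp
  set q := ν.toJordanDecomposition.negPart with hq
  have hνapp : ∀ A : Set S, MeasurableSet A → ν A = (a A).toReal - (b A).toReal := by
    intro A hA
    rw [h, VectorMeasure.sub_apply, Measure.toSignedMeasure_apply_measurable hA,
      Measure.toSignedMeasure_apply_measurable hA]
    rfl
  have hpuniv : (p Set.univ).toReal = ν uᶜ := by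
    have : p Set.univ = p uᶜ := by
      rw [← measure_add_measure_compl hu, hpu, zero_add]
    rw [this, jordan_apply ν hu.compl, ← hp, ← hq, hqu]
    simp
  have hquniv : (q Set.univ).toReal = -ν u := by
    have : q Set.univ = q u := by
      rw [← measure_add_measure_compl hu, hqu, add_zero]
    rw [this, jordan_apply ν hu, ← hp, ← hq, hpu]
    simp
  have h1 : ν uᶜ ≤ (a Set.univ).toReal := by
    rw [hνapp _ hu.compl]
    have := ENNReal.toReal_mono (measure_ne_top a _) (measure_mono (Set.subset_univ uᶜ))
    have := ENNReal.toReal_nonneg (a := b uᶜ)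
    linarith
  have h2 : -ν u ≤ (b Set.univ).toReal := by
    rw [hνapp _ hu]
    have := ENNReal.toReal_mono (measure_ne_top b _) (measure_mono (Set.subset_univ u))
    have := ENNReal.toReal_nonneg (a := a u)
    linarith
  rw [tvNorm_eq, ← hp, ← hq, hpuniv, hquniv]
  exact add_le_add h1 h2

lemma tvNorm_add_le (x y : SignedMeasure S) : tvNorm (x + y) ≤ tvNorm x + tvNorm y := by
  have hx := x.toSignedMeasure_toJordanDecomposition
  have hy := y.toSignedMeasure_toJordanDecomposition
  rw [JordanDecomposition.toSignedMeasure] at hx hy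
  have hrep : x + y =
      (x.toJordanDecomposition.posPart + y.toJordanDecomposition.posPart).toSignedMeasure -
      (x.toJordanDecomposition.negPart + y.toJordanDecomposition.negPart).toSignedMeasure := by
    rw [Measure.toSignedMeasure_add, Measure.toSignedMeasure_add]
    conv_lhs => rw [← hx, ← hy]
    abel
  calc tvNorm (x + y) ≤ _ := tvNorm_le_of_eq_sub _ _ _ hrep
    _ ≤ tvNorm x + tvNorm y := by
        rw [tvNorm_eq x, tvNorm_eq y, Measure.add_apply, Measure.add_apply,
          ENNReal.toReal_add (measure_ne_top _ _) (measure_ne_top _ _),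
          ENNReal.toReal_add (measure_ne_top _ _) (measure_ne_top _ _)]
        linarith

lemma tvNorm_sub_le (x y : SignedMeasure S) : tvNorm (x - y) ≤ tvNorm x + tvNorm y := by
  rw [sub_eq_add_neg]
  exact (tvNorm_add_le x (-y)).trans (by rw [tvNorm_neg])

lemma abs_apply_le_tvNorm (ν : SignedMeasure S) {A : Set S} (hA : MeasurableSet A) :
    |ν A| ≤ tvNorm ν := by
  rw [jordan_apply ν hA, tvNorm_eq]
  have h1 := ENNReal.toReal_mono (measure_ne_top ν.toJordanDecomposition.posPart _)
    (measure_mono (Set.subset_univ A))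
  have h2 := ENNReal.toReal_mono (measure_ne_top ν.toJordanDecomposition.negPart _)
    (measure_mono (Set.subset_univ A))
  have h3 := ENNReal.toReal_nonneg (a := ν.toJordanDecomposition.posPart A)
  have h4 := ENNReal.toReal_nonneg (a := ν.toJordanDecomposition.negPart A)
  rw [abs_sub_le_iff]
  constructor <;> linarith

lemma prob_toSM (ρ : Measure S) [IsProbabilityMeasure ρ] :
    (∀ A : Set S, MeasurableSet A → 0 ≤ ρ.toSignedMeasure A) ∧ ρ.toSignedMeasure Set.univ = 1 := by
  constructor
  · intro A hA
    rw [Measure.toSignedMeasure_apply_measurable hA]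
    exact ENNReal.toReal_nonneg
  · rw [Measure.toSignedMeasure_apply_measurable MeasurableSet.univ, probReal_univ]

lemma abs_add_abs_compl_le_tvNorm (ν : SignedMeasure S) {A : Set S} (hA : MeasurableSet A) :
    |ν A| + |ν Aᶜ| ≤ tvNorm ν := by
  set p := ν.toJordanDecomposition.posPart with hp
  set q := ν.toJordanDecomposition.negPart with hq
  have e1 : |ν A| ≤ (p A).toReal + (q A).toReal := by
    rw [jordan_apply ν hA, ← hp, ← hq, abs_sub_le_iff]
    have := ENNReal.toReal_nonneg (a := p A); have := ENNReal.toReal_nonneg (a := q A)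
    constructor <;> linarith
  have e2 : |ν Aᶜ| ≤ (p Aᶜ).toReal + (q Aᶜ).toReal := by
    rw [jordan_apply ν hA.compl, ← hp, ← hq, abs_sub_le_iff]
    have := ENNReal.toReal_nonneg (a := p Aᶜ); have := ENNReal.toReal_nonneg (a := q Aᶜ)
    constructor <;> linarith
  have hpA : (p A).toReal + (p Aᶜ).toReal = (p Set.univ).toReal := by
    rw [← ENNReal.toReal_add (measure_ne_top _ _) (measure_ne_top _ _),
      measure_add_measure_compl hA]
  have hqA : (q A).toReal + (q Aᶜ).toReal = (q Set.univ).toReal := by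
    rw [← ENNReal.toReal_add (measure_ne_top _ _) (measure_ne_top _ _),
      measure_add_measure_compl hA]
  rw [tvNorm_eq, ← hp, ← hq]
  linarith

lemma ofReal_add_ofReal_neg (a : ℝ) :
    ENNReal.ofReal a + ENNReal.ofReal (-a) = ENNReal.ofReal |a| := by
  rcases le_total 0 a with h | h
  · rw [ENNReal.ofReal_of_nonpos (neg_nonpos.mpr h), add_zero, abs_of_nonneg h]
  · rw [ENNReal.ofReal_of_nonpos h, zero_add, abs_of_nonpos h]

lemma tvNorm_withDensityᵥ (m : Measure S) {h : S → ℝ} (hm : Measurable h)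
    (hi : Integrable h m) :
    tvNorm (m.withDensityᵥ h) = ∫ x, |h x| ∂m := by
  have habs : Integrable (fun x => |h x|) m := hi.abs
  have hlint : ∫⁻ x, ENNReal.ofReal |h x| ∂m = ENNReal.ofReal (∫ x, |h x| ∂m) :=
    (ofReal_integral_eq_lintegral_ofReal habs (Filter.Eventually.of_forall fun x => abs_nonneg _)).symm
  haveI h1 := isFiniteMeasure_withDensity_ofReal hi.2
  haveI h2 := isFiniteMeasure_withDensity_ofReal hi.neg.2
  apply le_antisymm
  · calc tvNorm (m.withDensityᵥ h)
        ≤ ((m.withDensity fun x => ENNReal.ofReal (h x)) Set.univ).toReal +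
          ((m.withDensity fun x => ENNReal.ofReal (-h x)) Set.univ).toReal :=
          tvNorm_le_of_eq_sub _ _ _
            (withDensityᵥ_eq_withDensity_pos_part_sub_withDensity_neg_part hi)
      _ = ∫ x, |h x| ∂m := by
          rw [← ENNReal.toReal_add (measure_ne_top _ _) (measure_ne_top _ _),
            withDensity_apply _ MeasurableSet.univ, withDensity_apply _ MeasurableSet.univ,
            setLIntegral_univ, setLIntegral_univ,
            ← lintegral_add_left hm.ennreal_ofReal]
          simp_rw [ofReal_add_ofReal_neg]
          rw [hlint, ENNReal.toReal_ofReal (integral_nonneg fun x => abs_nonneg _)]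
  · set A : Set S := {x | 0 ≤ h x} with hAdef
    have hA : MeasurableSet A := measurableSet_le measurable_const hm
    have hiA : ∫ x in A, |h x| ∂m = (m.withDensityᵥ h) A := by
      rw [withDensityᵥ_apply hi hA]
      exact setIntegral_congr_fun hA fun x hx => abs_of_nonneg hx
    have hiAc : ∫ x in Aᶜ, |h x| ∂m = -((m.withDensityᵥ h) Aᶜ) := by
      rw [withDensityᵥ_apply hi hA.compl, ← integral_neg]
      exact setIntegral_congr_fun hA.compl fun x hx =>
        abs_of_neg (lt_of_not_ge (by simpa [hAdef] using hx))
    calc ∫ x, |h x| ∂m = ∫ x in A, |h x| ∂m + ∫ x in Aᶜ, |h x| ∂m :=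
          (integral_add_compl hA habs).symm
      _ = (m.withDensityᵥ h) A - (m.withDensityᵥ h) Aᶜ := by rw [hiA, hiAc]; ring
      _ ≤ |(m.withDensityᵥ h) A| + |(m.withDensityᵥ h) Aᶜ| := by
          have := le_abs_self ((m.withDensityᵥ h) A)
          have := neg_le_abs ((m.withDensityᵥ h) Aᶜ)
          linarith
      _ ≤ tvNorm (m.withDensityᵥ h) := abs_add_abs_compl_le_tvNorm _ hA


lemma tv_prob {μ : SignedMeasure S} (hμ : IsProbSM μ) :
    IsProbabilityMeasure μ.totalVariation := by
  constructor
  rw [tv_of_nonneg _ hμ.1]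
  have h := apply_of_nonneg hμ.1 MeasurableSet.univ
  rw [hμ.2] at h
  exact (ENNReal.toReal_eq_one_iff _).1 h.symm

lemma probSM_toSM (ρ : Measure S) [IsProbabilityMeasure ρ] : IsProbSM ρ.toSignedMeasure :=
  prob_toSM ρ

lemma T_prob {T : SignedMeasure S →ₗ[ℝ] SignedMeasure S} (hT : IsTransitionOp T)
    {μ : SignedMeasure S} (hμ : IsProbSM μ) : IsProbSM (T μ) := by
  obtain ⟨hpos, hiso⟩ := hT.2 μ hμ.1
  refine ⟨hpos, ?_⟩
  rw [← tvNorm_of_nonneg hpos, hiso, tvNorm_of_nonneg hμ.1, hμ.2]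

lemma kx_integral
    (m : Measure S) [IsProbabilityMeasure m]
    (k : S → S → ℝ) (hk_meas : Measurable (Function.uncurry k))
    (T : SignedMeasure S →ₗ[ℝ] SignedMeasure S)
    (hT : IsTransitionOp T)
    (hTk : ∀ μ : SignedMeasure S, IsProbSM μ → ∀ A : Set S, MeasurableSet A →
      (T μ) A = ∫ x in A, (∫ y, k x y ∂(μ.totalVariation)) ∂m)
    (y : S) : Integrable (fun x => k x y) m ∧ ∫ x, k x y ∂m = 1 := by
  set ν := (Measure.dirac y).toSignedMeasure with hν
  have hprob : IsProbSM ν := probSM_toSM _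
  have h1 : T ν Set.univ = ∫ x, k x y ∂m := by
    rw [hTk ν hprob Set.univ MeasurableSet.univ, setIntegral_univ]
    have hx : ∀ x : S, ∫ y', k x y' ∂ν.totalVariation = k x y := by
      intro x
      rw [hν, tv_toSM]
      exact integral_dirac' _ y ((hk_meas.comp measurable_prodMk_left).stronglyMeasurable)
    simp only [hx]
  have h2 : T ν Set.univ = 1 := by
    obtain ⟨hpos, hiso⟩ := hT.2 ν hprob.1
    rw [← tvNorm_of_nonneg hpos, hiso, tvNorm_of_nonneg hprob.1, hprob.2]
  have h3 : ∫ x, k x y ∂m = 1 := by rw [← h1, h2]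
  refine ⟨?_, h3⟩
  by_contra hni
  rw [integral_undef hni] at h3
  norm_num at h3

lemma density_key
    (m : Measure S) [IsProbabilityMeasure m]
    (k : S → S → ℝ) (hk_meas : Measurable (Function.uncurry k))
    (hk_nonneg : ∀ x y, 0 ≤ k x y)
    (T : SignedMeasure S →ₗ[ℝ] SignedMeasure S)
    (hT : IsTransitionOp T)
    (hTk : ∀ μ : SignedMeasure S, IsProbSM μ → ∀ A : Set S, MeasurableSet A →
      (T μ) A = ∫ x in A, (∫ y, k x y ∂(μ.totalVariation)) ∂m)
    (g : S → ℝ) (hminor : ∀ x y, g x ≤ k x y)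
    (μ : SignedMeasure S) (hμ : IsProbSM μ) :
    ∃ F : S → ℝ, Measurable F ∧ Integrable F m ∧ (∀ᵐ x ∂m, g x ≤ F x) ∧
      T μ = m.withDensityᵥ F ∧ ∫ x, F x ∂m = 1 := by
  haveI : IsProbabilityMeasure μ.totalVariation := tv_prob hμ
  set ρ := μ.totalVariation with hρ
  set F : S → ℝ := fun x => ∫ y, k x y ∂ρ with hF
  have hFmeas : Measurable F :=
    (hk_meas.stronglyMeasurable.integral_prod_right).measurable
  have hofReal : Measurable (Function.uncurry fun x y => ENNReal.ofReal (k x y)) := by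
    exact ENNReal.measurable_ofReal.comp hk_meas
  have hswap : ∫⁻ x, ∫⁻ y, ENNReal.ofReal (k x y) ∂ρ ∂m = 1 := by
    rw [lintegral_lintegral_swap hofReal.aemeasurable]
    have hinner : ∀ y : S, ∫⁻ x, ENNReal.ofReal (k x y) ∂m = 1 := by
      intro y
      obtain ⟨hint, hval⟩ := kx_integral m k hk_meas T hT hTk y
      rw [← ofReal_integral_eq_lintegral_ofReal hint
        (Filter.Eventually.of_forall fun x => hk_nonneg x y), hval, ENNReal.ofReal_one]
    simp only [hinner, lintegral_one, measure_univ]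
  have hlintmeas : Measurable fun x => ∫⁻ y, ENNReal.ofReal (k x y) ∂ρ :=
    Measurable.lintegral_prod_right hofReal
  have hae : ∀ᵐ x ∂m, ∫⁻ y, ENNReal.ofReal (k x y) ∂ρ ≠ ⊤ := by
    have := ae_lt_top hlintmeas (by rw [hswap]; exact ENNReal.one_ne_top)
    exact this.mono fun x hx => hx.ne
  have hint_ae : ∀ᵐ x ∂m, Integrable (fun y => k x y) ρ := by
    refine hae.mono fun x hx => ?_
    refine ⟨((hk_meas.comp measurable_prodMk_left).stronglyMeasurable).aestronglyMeasurable, ?_⟩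
    rw [HasFiniteIntegral]
    have : ∀ y : S, ‖k x y‖ₑ = ENNReal.ofReal (k x y) := fun y =>
      Real.enorm_eq_ofReal (hk_nonneg x y)
    simp only [this]
    exact lt_top_iff_ne_top.2 hx
  have hFnonneg : ∀ x, 0 ≤ F x := fun x => integral_nonneg fun y => hk_nonneg x y
  have hFle : ∀ x, ENNReal.ofReal (F x) ≤ ∫⁻ y, ENNReal.ofReal (k x y) ∂ρ := by
    intro x
    by_cases hx : Integrable (fun y => k x y) ρ
    · rw [hF, ← ofReal_integral_eq_lintegral_ofReal hx
        (Filter.Eventually.of_forall fun y => hk_nonneg x y)]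
    · rw [hF]
      simp only [integral_undef hx, ENNReal.ofReal_zero]
      exact zero_le
  have hFint : Integrable F m := by
    refine ⟨hFmeas.stronglyMeasurable.aestronglyMeasurable, ?_⟩
    rw [HasFiniteIntegral]
    calc ∫⁻ x, (‖F x‖₊ : ENNReal) ∂m
        ≤ ∫⁻ x, ∫⁻ y, ENNReal.ofReal (k x y) ∂ρ ∂m := by
          refine lintegral_mono fun x => ?_
          rw [show (‖F x‖₊ : ENNReal) = ‖F x‖ₑ from rfl, Real.enorm_eq_ofReal (hFnonneg x)]
          exact hFle x
      _ = 1 := hswap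
      _ < ⊤ := ENNReal.one_lt_top
  have hFg : ∀ᵐ x ∂m, g x ≤ F x := by
    refine hint_ae.mono fun x hx => ?_
    calc g x = ∫ _, g x ∂ρ := by rw [integral_const, probReal_univ]; simp
      _ ≤ ∫ y, k x y ∂ρ := integral_mono (integrable_const _) hx fun y => hminor x y
  have hTμ : T μ = m.withDensityᵥ F := by
    ext A hA
    rw [hTk μ hμ A hA, withDensityᵥ_apply hFint hA]
  have hF1 : ∫ x, F x ∂m = 1 := by
    obtain ⟨hpos, hiso⟩ := hT.2 μ hμ.1
    have huniv : T μ Set.univ = 1 := by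
      rw [← tvNorm_of_nonneg hpos, hiso, tvNorm_of_nonneg hμ.1, hμ.2]
    rw [hTk μ hμ Set.univ MeasurableSet.univ, setIntegral_univ] at huniv
    exact huniv
  exact ⟨F, hFmeas, hFint, hFg, hTμ, hF1⟩

set_option maxHeartbeats 1000000 in
lemma contraction
    (m : Measure S) [IsProbabilityMeasure m]
    (k : S → S → ℝ) (hk_meas : Measurable (Function.uncurry k))
    (hk_nonneg : ∀ x y, 0 ≤ k x y)
    (T : SignedMeasure S →ₗ[ℝ] SignedMeasure S)
    (hT : IsTransitionOp T)
    (hTk : ∀ μ : SignedMeasure S, IsProbSM μ → ∀ A : Set S, MeasurableSet A →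
      (T μ) A = ∫ x in A, (∫ y, k x y ∂(μ.totalVariation)) ∂m)
    (g : S → ℝ) (hg_int : Integrable g m) (hminor : ∀ x y, g x ≤ k x y)
    (μ₁ μ₂ : SignedMeasure S) (h₁ : IsProbSM μ₁) (h₂ : IsProbSM μ₂) :
    tvNorm (T μ₁ - T μ₂) ≤ (1 - ∫ x, g x ∂m) * tvNorm (μ₁ - μ₂) := by
  set ν := μ₁ - μ₂ with hνdef
  set p := ν.toJordanDecomposition.posPart with hp
  set q := ν.toJordanDecomposition.negPart with hq
  have hspec : p.toSignedMeasure - q.toSignedMeasure = ν :=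
    ν.toSignedMeasure_toJordanDecomposition
  have hja : ν Set.univ = (p Set.univ).toReal - (q Set.univ).toReal :=
    jordan_apply ν MeasurableSet.univ
  have htv' : tvNorm ν = (p Set.univ).toReal + (q Set.univ).toReal := tvNorm_eq ν
  set t := (p Set.univ).toReal with ht
  have hνuniv : ν Set.univ = 0 := by
    rw [hνdef, VectorMeasure.sub_apply, h₁.2, h₂.2, sub_self]
  have hqt : (q Set.univ).toReal = t := by
    rw [hνuniv] at hja; rw [ht]; linarith
  have htv : tvNorm ν = t + t := by rw [htv', hqt]
  have ht0 : 0 ≤ t := ENNReal.toReal_nonneg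
  have hgoal : tvNorm (T μ₁ - T μ₂) ≤ (1 - ∫ x, g x ∂m) * tvNorm ν := by
    rcases eq_or_lt_of_le ht0 with ht0' | htpos
    · have hν0 : ν = 0 := eq_zero_of_tvNorm_zero (by rw [htv, ← ht0']; ring)
      have h12 : μ₁ = μ₂ := by rwa [hνdef, sub_eq_zero] at hν0
      rw [h12, sub_self, tvNorm_zero, hν0, tvNorm_zero, mul_zero]
    · have hpt : p Set.univ = ENNReal.ofReal t := by
        rw [ht, ENNReal.ofReal_toReal (measure_ne_top p _)]
      have hqt' : q Set.univ = ENNReal.ofReal t := by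
        rw [← ENNReal.ofReal_toReal (measure_ne_top q _), hqt]
      have hoft0 : (ENNReal.ofReal t) ≠ 0 := (ENNReal.ofReal_pos.2 htpos).ne'
      set P : Measure S := (ENNReal.ofReal t)⁻¹ • p with hP
      set Q : Measure S := (ENNReal.ofReal t)⁻¹ • q with hQ
      haveI hPprob : IsProbabilityMeasure P := ⟨by
        rw [hP, Measure.smul_apply, smul_eq_mul, hpt,
          ENNReal.inv_mul_cancel hoft0 ENNReal.ofReal_ne_top]⟩
      haveI hQprob : IsProbabilityMeasure Q := ⟨by
        rw [hQ, Measure.smul_apply, smul_eq_mul, hqt',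
          ENNReal.inv_mul_cancel hoft0 ENNReal.ofReal_ne_top]⟩
      have hsmulP : t • P.toSignedMeasure = p.toSignedMeasure := by
        ext A hA
        rw [VectorMeasure.smul_apply, Measure.toSignedMeasure_apply_measurable hA,
          Measure.toSignedMeasure_apply_measurable hA]
        simp only [measureReal_def, hP, Measure.smul_apply, smul_eq_mul, ENNReal.toReal_mul,
          ENNReal.toReal_inv, ENNReal.toReal_ofReal ht0]
        field_simp
      have hsmulQ : t • Q.toSignedMeasure = q.toSignedMeasure := by
        ext A hA
        rw [VectorMeasure.smul_apply, Measure.toSignedMeasure_apply_measurable hA,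
          Measure.toSignedMeasure_apply_measurable hA]
        simp only [measureReal_def, hQ, Measure.smul_apply, smul_eq_mul, ENNReal.toReal_mul,
          ENNReal.toReal_inv, ENNReal.toReal_ofReal ht0]
        field_simp
      have hνrep : ν = t • P.toSignedMeasure - t • Q.toSignedMeasure := by
        rw [hsmulP, hsmulQ, hspec]
      obtain ⟨FP, hFPmeas, hFPint, hFPg, hTP, hFP1⟩ :=
        density_key m k hk_meas hk_nonneg T hT hTk g hminor P.toSignedMeasure (probSM_toSM P)
      obtain ⟨FQ, hFQmeas, hFQint, hFQg, hTQ, hFQ1⟩ :=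
        density_key m k hk_meas hk_nonneg T hT hTk g hminor Q.toSignedMeasure (probSM_toSM Q)
      set G : S → ℝ := fun x => t * FP x - t * FQ x with hG
      have hGeq : (t • FP - t • FQ : S → ℝ) = G := by
        funext x; simp [hG, smul_eq_mul]
      have hTν : T μ₁ - T μ₂ = m.withDensityᵥ G := by
        have h0 : T μ₁ - T μ₂ = T ν := by rw [hνdef, map_sub]
        rw [h0, hνrep, map_sub, LinearMap.map_smul, LinearMap.map_smul, hTP, hTQ,
          ← withDensityᵥ_smul FP (t : ℝ), ← withDensityᵥ_smul FQ (t : ℝ),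
          ← withDensityᵥ_sub (hFPint.smul (t : ℝ)) (hFQint.smul (t : ℝ)), hGeq]
      have hGmeas : Measurable G := (hFPmeas.const_mul t).sub (hFQmeas.const_mul t)
      have hGint : Integrable G m := (hFPint.const_mul t).sub (hFQint.const_mul t)
      have htvν : tvNorm (T μ₁ - T μ₂) = ∫ x, |G x| ∂m := by
        rw [hTν]; exact tvNorm_withDensityᵥ m hGmeas hGint
      have hRint : Integrable (fun x => t * FP x + t * FQ x - 2 * t * g x) m :=
        ((hFPint.const_mul t).add (hFQint.const_mul t)).sub (hg_int.const_mul (2 * t))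
      have hbound : ∀ᵐ x ∂m, |G x| ≤ t * FP x + t * FQ x - 2 * t * g x := by
        filter_upwards [hFPg, hFQg] with x hx1 hx2
        rw [hG, abs_sub_le_iff]
        constructor <;> nlinarith [mul_le_mul_of_nonneg_left hx1 ht0,
          mul_le_mul_of_nonneg_left hx2 ht0]
      calc tvNorm (T μ₁ - T μ₂) = ∫ x, |G x| ∂m := htvν
        _ ≤ ∫ x, (t * FP x + t * FQ x - 2 * t * g x) ∂m :=
            integral_mono_ae hGint.abs hRint hbound
        _ = t * ∫ x, FP x ∂m + t * ∫ x, FQ x ∂m - 2 * t * ∫ x, g x ∂m := by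
            have hsum : Integrable (fun x => t * FP x + t * FQ x) m :=
              (hFPint.const_mul t).add (hFQint.const_mul t)
            rw [integral_sub hsum (hg_int.const_mul (2 * t)),
              integral_add (hFPint.const_mul t) (hFQint.const_mul t),
              integral_const_mul, integral_const_mul, integral_const_mul]
        _ = (1 - ∫ x, g x ∂m) * tvNorm ν := by rw [htv, hFP1, hFQ1]; ring
  exact hgoal

set_option maxHeartbeats 1000000 in
theorem dobrushin_kernel_minorization
    (m : Measure S) [IsProbabilityMeasure m]
    (k : S → S → ℝ) (hk_meas : Measurable (Function.uncurry k))
    (hk_nonneg : ∀ x y, 0 ≤ k x y)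
    (T : SignedMeasure S →ₗ[ℝ] SignedMeasure S)
    (hT : IsTransitionOp T)
    (hTk : ∀ μ : SignedMeasure S, IsProbSM μ → ∀ A : Set S, MeasurableSet A →
      (T μ) A = ∫ x in A, (∫ y, k x y ∂(μ.totalVariation)) ∂m)
    (g : S → ℝ) (hg_meas : Measurable g) (hg_nonneg : ∀ x, 0 ≤ g x)
    (hg_int : Integrable g m)
    (hminor : ∀ x y, g x ≤ k x y) :
    dobrushin T ≤ 1 - ∫ x, g x ∂m ∧
    (¬ (g =ᵐ[m] 0) →
      dobrushin T < 1 ∧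
      ∃ π : SignedMeasure S, IsProbSM π ∧ T π = π ∧
        (∀ π' : SignedMeasure S, IsProbSM π' → T π' = π' → π' = π) ∧
        ∀ μ : SignedMeasure S, IsProbSM μ → ∀ n : ℕ, 1 ≤ n →
          tvNorm (π - (T ^ n) μ) ≤ 2 * (dobrushin T) ^ n) := by
  classical
  obtain ⟨F0, hF0meas, hF0int, hF0g, hTm, hF01⟩ :=
    density_key m k hk_meas hk_nonneg T hT hTk g hminor m.toSignedMeasure (probSM_toSM m)
  have hgle1 : ∫ x, g x ∂m ≤ 1 := by
    rw [← hF01]; exact integral_mono_ae hg_int hF0int hF0g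
  have hα0 : (0:ℝ) ≤ 1 - ∫ x, g x ∂m := by linarith
  set Rset := {r : ℝ | ∃ μ₁ μ₂ : SignedMeasure S, IsProbSM μ₁ ∧ IsProbSM μ₂ ∧ μ₁ ≠ μ₂ ∧
    r = tvNorm (T μ₁ - T μ₂) / tvNorm (μ₁ - μ₂)} with hRset
  have hdob : dobrushin T = sSup Rset := rfl
  have hub : ∀ r ∈ Rset, r ≤ 1 - ∫ x, g x ∂m := by
    rintro r ⟨μ₁, μ₂, h₁, h₂, hne, rfl⟩
    have hd0 : tvNorm (μ₁ - μ₂) ≠ 0 := fun h => hne (sub_eq_zero.1 (eq_zero_of_tvNorm_zero h))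
    have hdpos : 0 < tvNorm (μ₁ - μ₂) := lt_of_le_of_ne (tvNorm_nonneg _) (Ne.symm hd0)
    rw [div_le_iff₀ hdpos]
    exact contraction m k hk_meas hk_nonneg T hT hTk g hg_int hminor μ₁ μ₂ h₁ h₂
  have hpart1 : dobrushin T ≤ 1 - ∫ x, g x ∂m := by
    rw [hdob]; exact Real.sSup_le hub hα0
  have hBdd : BddAbove Rset := ⟨1 - ∫ x, g x ∂m, hub⟩
  have hδ0 : 0 ≤ dobrushin T := by
    rw [hdob]
    refine Real.sSup_nonneg ?_
    rintro r ⟨μ₁, μ₂, h₁, h₂, hne, rfl⟩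
    exact div_nonneg (tvNorm_nonneg _) (tvNorm_nonneg _)
  have hδcon : ∀ μ ν : SignedMeasure S, IsProbSM μ → IsProbSM ν →
      tvNorm (T μ - T ν) ≤ dobrushin T * tvNorm (μ - ν) := by
    intro μ ν hμ hν
    by_cases hne : μ = ν
    · rw [hne, sub_self, sub_self, tvNorm_zero]; simp
    · have hd0 : tvNorm (μ - ν) ≠ 0 := fun h => hne (sub_eq_zero.1 (eq_zero_of_tvNorm_zero h))
      have hmem : tvNorm (T μ - T ν) / tvNorm (μ - ν) ∈ Rset := ⟨μ, ν, hμ, hν, hne, rfl⟩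
      have hle := le_csSup hBdd hmem
      rw [← hdob] at hle
      calc tvNorm (T μ - T ν)
          = (tvNorm (T μ - T ν) / tvNorm (μ - ν)) * tvNorm (μ - ν) := by field_simp
        _ ≤ dobrushin T * tvNorm (μ - ν) := mul_le_mul_of_nonneg_right hle (tvNorm_nonneg _)
  refine ⟨hpart1, fun hg0 => ?_⟩
  have hgpos : 0 < ∫ x, g x ∂m := by
    rcases lt_or_eq_of_le (integral_nonneg (μ := m) (f := g) hg_nonneg) with h | h
    · exact h
    · exact absurd ((integral_eq_zero_iff_of_nonneg hg_nonneg hg_int).1 h.symm) hg0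
  have hα1 : 1 - ∫ x, g x ∂m < 1 := by linarith
  have hδ1 : dobrushin T < 1 := lt_of_le_of_lt hpart1 hα1
  refine ⟨hδ1, ?_⟩
  set μseq : ℕ → SignedMeasure S := fun n => (T ^ n) m.toSignedMeasure with hμseq
  have hpow : ∀ (x : SignedMeasure S) (n : ℕ), (T ^ (n+1)) x = T ((T ^ n) x) := by
    intro x n; rw [pow_succ']; rfl
  have hprobseq : ∀ n, IsProbSM (μseq n) := by
    intro n; induction n with
    | zero =>
      show IsProbSM ((T ^ 0) m.toSignedMeasure)
      rw [pow_zero]; exact probSM_toSM m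
    | succ n ih =>
      show IsProbSM ((T ^ (n+1)) m.toSignedMeasure)
      rw [hpow]; exact T_prob hT ih
  have hstep : ∀ n, μseq (n+1) = T (μseq n) := fun n => hpow m.toSignedMeasure n
  choose Fs hFsmeas hFsint hFsg hFseq hFs1 using
    fun n => density_key m k hk_meas hk_nonneg T hT hTk g hminor (μseq n) (hprobseq n)
  have hμd : ∀ n, μseq (n+1) = m.withDensityᵥ (Fs n) := fun n => (hstep n).trans (hFseq n)
  have hd2 : ∀ n, tvNorm (μseq (n+1) - μseq (n+2)) ≤ 2 * (1 - ∫ x, g x ∂m) ^ (n+1) := by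
    have hbase : tvNorm (μseq 0 - μseq 1) ≤ 2 := by
      have h0 := hprobseq 0; have h1 := hprobseq 1
      calc tvNorm (μseq 0 - μseq 1) ≤ tvNorm (μseq 0) + tvNorm (μseq 1) := tvNorm_sub_le _ _
        _ = 2 := by rw [tvNorm_of_nonneg h0.1, h0.2, tvNorm_of_nonneg h1.1, h1.2]; norm_num
    have hind : ∀ n, tvNorm (μseq n - μseq (n+1)) ≤ 2 * (1 - ∫ x, g x ∂m) ^ n := by
      intro n; induction n with
      | zero => simpa using hbase
      | succ n ih =>
        have hc := contraction m k hk_meas hk_nonneg T hT hTk g hg_int hminor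
          (μseq n) (μseq (n+1)) (hprobseq n) (hprobseq (n+1))
        rw [← hstep n, ← hstep (n+1)] at hc
        calc tvNorm (μseq (n+1) - μseq (n+2))
            ≤ (1 - ∫ x, g x ∂m) * tvNorm (μseq n - μseq (n+1)) := hc
          _ ≤ (1 - ∫ x, g x ∂m) * (2 * (1 - ∫ x, g x ∂m) ^ n) :=
              mul_le_mul_of_nonneg_left ih hα0
          _ = 2 * (1 - ∫ x, g x ∂m) ^ (n+1) := by ring
    exact fun n => hind (n+1)
  set φ : ℕ → (S →₁[m] ℝ) := fun n => (hFsint n).toL1 (Fs n) with hφ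
  have hdist2 : ∀ n, dist (φ n) (φ (n+1)) = tvNorm (μseq (n+1) - μseq (n+2)) := by
    intro n
    have hdse : μseq (n+1) - μseq (n+2) = m.withDensityᵥ (Fs n - Fs (n+1)) := by
      rw [hμd n, hμd (n+1), ← withDensityᵥ_sub (hFsint n) (hFsint (n+1))]
    have hsubmeas : Measurable (Fs n - Fs (n+1)) := (hFsmeas n).sub (hFsmeas (n+1))
    have hsubint : Integrable (Fs n - Fs (n+1)) m := (hFsint n).sub (hFsint (n+1))
    rw [hdse, tvNorm_withDensityᵥ m hsubmeas hsubint]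
    have hn : dist (φ n) (φ (n+1)) = ‖((hFsint n).sub (hFsint (n+1))).toL1 (Fs n - Fs (n+1))‖ := by
      rw [dist_eq_norm, Integrable.toL1_sub]
    rw [hn, L1.norm_of_fun_eq_integral_norm]
    simp only [Real.norm_eq_abs]
  have hcauchy : CauchySeq φ := by
    apply cauchySeq_of_le_geometric (1 - ∫ x, g x ∂m) (2 * (1 - ∫ x, g x ∂m)) hα1
    intro n
    rw [hdist2 n]
    calc tvNorm (μseq (n+1) - μseq (n+2)) ≤ 2 * (1 - ∫ x, g x ∂m) ^ (n+1) := hd2 n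
      _ = 2 * (1 - ∫ x, g x ∂m) * (1 - ∫ x, g x ∂m) ^ n := by ring
  obtain ⟨φl, hφl⟩ := cauchySeq_tendsto_of_complete hcauchy
  have hfint0 : Integrable (⇑φl) m := L1.integrable_coeFn φl
  set f : S → ℝ := hfint0.1.mk ⇑φl with hfdef
  have hfeq : ⇑φl =ᵐ[m] f := hfint0.1.ae_eq_mk
  have hfmeas : Measurable f := hfint0.1.stronglyMeasurable_mk.measurable
  have hfint : Integrable f m := hfint0.congr hfeq
  set π : SignedMeasure S := m.withDensityᵥ f with hπdef
  have hπn : ∀ n, tvNorm (π - μseq (n+1)) = dist (φ n) φl := by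
    intro n
    have h1 : π - μseq (n+1) = m.withDensityᵥ (f - Fs n) := by
      rw [hπdef, hμd n, ← withDensityᵥ_sub hfint (hFsint n)]
    have hsubmeas : Measurable (f - Fs n) := hfmeas.sub (hFsmeas n)
    have hsubint : Integrable (f - Fs n) m := hfint.sub (hFsint n)
    rw [h1, tvNorm_withDensityᵥ m hsubmeas hsubint, dist_comm, L1.dist_eq_integral_dist]
    refine integral_congr_ae ?_
    filter_upwards [hfeq, (hFsint n).coeFn_toL1] with x hx1 hx2
    rw [Real.dist_eq, hx1, hx2, Pi.sub_apply, abs_sub_comm]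
  have htend : Filter.Tendsto (fun n => tvNorm (π - μseq (n+1))) Filter.atTop (nhds 0) := by
    have heq : (fun n => tvNorm (π - μseq (n+1))) = fun n => dist (φ n) φl := funext hπn
    rw [heq]
    exact tendsto_iff_dist_tendsto_zero.1 hφl
  have happly : ∀ A : Set S, MeasurableSet A →
      Filter.Tendsto (fun n => (μseq (n+1)) A) Filter.atTop (nhds (π A)) := by
    intro A hA
    rw [tendsto_iff_dist_tendsto_zero]
    refine squeeze_zero (fun n => dist_nonneg) (fun n => ?_) htend
    rw [Real.dist_eq]
    have hval : (μseq (n+1)) A - π A = -((π - μseq (n+1)) A) := by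
      rw [VectorMeasure.sub_apply]; ring
    rw [hval, abs_neg]
    exact abs_apply_le_tvNorm _ hA
  have hπprob : IsProbSM π := by
    constructor
    · intro A hA
      exact ge_of_tendsto (happly A hA)
        (Filter.Eventually.of_forall fun n => (hprobseq (n+1)).1 A hA)
    · have h1 := happly Set.univ MeasurableSet.univ
      have h2 : (fun n : ℕ => (μseq (n+1)) Set.univ) = fun _ => (1:ℝ) :=
        funext fun n => (hprobseq (n+1)).2
      rw [h2] at h1
      exact (tendsto_nhds_unique h1 tendsto_const_nhds)
  have hfix : T π = π := by
    have hb : ∀ n, tvNorm (T π - π) ≤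
        (1 - ∫ x, g x ∂m) * tvNorm (π - μseq (n+1)) + tvNorm (π - μseq (n+2)) := by
      intro n
      have hsplit : T π - π = (T π - μseq (n+2)) + (μseq (n+2) - π) := by abel
      have h1 : tvNorm (T π - μseq (n+2)) ≤ (1 - ∫ x, g x ∂m) * tvNorm (π - μseq (n+1)) := by
        rw [hstep (n+1)]
        exact contraction m k hk_meas hk_nonneg T hT hTk g hg_int hminor π (μseq (n+1))
          hπprob (hprobseq (n+1))
      have h2 : tvNorm (μseq (n+2) - π) = tvNorm (π - μseq (n+2)) := by
        rw [← tvNorm_neg (μseq (n+2) - π), neg_sub]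
      calc tvNorm (T π - π) ≤ tvNorm (T π - μseq (n+2)) + tvNorm (μseq (n+2) - π) := by
            rw [hsplit]; exact tvNorm_add_le _ _
        _ ≤ (1 - ∫ x, g x ∂m) * tvNorm (π - μseq (n+1)) + tvNorm (π - μseq (n+2)) := by
            rw [h2]; exact add_le_add h1 le_rfl
    have htend2 : Filter.Tendsto (fun n =>
        (1 - ∫ x, g x ∂m) * tvNorm (π - μseq (n+1)) + tvNorm (π - μseq (n+2)))
        Filter.atTop (nhds 0) := by
      have ha := htend.const_mul (1 - ∫ x, g x ∂m)
      have hshift := htend.comp (Filter.tendsto_add_atTop_nat 1)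
      have := ha.add hshift
      simpa [Function.comp] using this
    have h0 : tvNorm (T π - π) ≤ 0 := ge_of_tendsto htend2 (Filter.Eventually.of_forall hb)
    have hz := le_antisymm h0 (tvNorm_nonneg _)
    have := eq_zero_of_tvNorm_zero hz
    rwa [sub_eq_zero] at this
  have huniq : ∀ π' : SignedMeasure S, IsProbSM π' → T π' = π' → π' = π := by
    intro π' hπ' hfix'
    have hc := contraction m k hk_meas hk_nonneg T hT hTk g hg_int hminor π' π hπ' hπprob
    rw [hfix', hfix] at hc
    have h1 : 0 ≤ tvNorm (π' - π) := tvNorm_nonneg _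
    have h2 : tvNorm (π' - π) = 0 := by nlinarith
    have := eq_zero_of_tvNorm_zero h2
    rwa [sub_eq_zero] at this
  refine ⟨π, hπprob, hfix, huniq, ?_⟩
  intro μ hμ n _
  have hiter : ∀ j, IsProbSM ((T ^ j) μ) := by
    intro j; induction j with
    | zero => simpa using hμ
    | succ j ih => rw [hpow]; exact T_prob hT ih
  have hmain : ∀ j, tvNorm (π - (T ^ j) μ) ≤ dobrushin T ^ j * tvNorm (π - μ) := by
    intro j; induction j with
    | zero => simp
    | succ j ih =>
      have h1 : π - (T ^ (j+1)) μ = T π - T ((T ^ j) μ) := by rw [hpow, hfix]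
      calc tvNorm (π - (T ^ (j+1)) μ) = tvNorm (T π - T ((T ^ j) μ)) := by rw [h1]
        _ ≤ dobrushin T * tvNorm (π - (T ^ j) μ) := hδcon π ((T ^ j) μ) hπprob (hiter j)
        _ ≤ dobrushin T * (dobrushin T ^ j * tvNorm (π - μ)) :=
            mul_le_mul_of_nonneg_left ih hδ0
        _ = dobrushin T ^ (j+1) * tvNorm (π - μ) := by ring
  have h2' : tvNorm (π - μ) ≤ 2 := by
    calc tvNorm (π - μ) ≤ tvNorm π + tvNorm μ := tvNorm_sub_le _ _
      _ = 2 := by rw [tvNorm_of_nonneg hπprob.1, hπprob.2, tvNorm_of_nonneg hμ.1, hμ.2]; norm_num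
  calc tvNorm (π - (T ^ n) μ) ≤ dobrushin T ^ n * tvNorm (π - μ) := hmain n
    _ ≤ dobrushin T ^ n * 2 := mul_le_mul_of_nonneg_left h2' (pow_nonneg hδ0 n)
    _ = 2 * dobrushin T ^ n := by ring
end

section
/- Let Q : [0,∞) → ℝ^{n×n} be continuous, 1-periodic, probability generating (column sums zero, off-diagonal nonnegative), and suppose there exist 0 ≤ t₀ < t₁ ≤ 1 and c > 0 such that the subdiagonal entries q_{j,j-1}(t) ≥ c for all t ∈ (t₀,t₁) and j = 1,…,n (with cyclic convention q_{1,0} := q_{1,n}). Then the ODE v' = Q(t)v has a unique 1-periodic probability-vector solution π(t), and every solution starting at a probability vector converges to π with exponential rate as t → ∞. -/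
open Matrix

set_option linter.unusedSectionVars false
set_option maxHeartbeats 1000000

open Matrix Set
open scoped NNReal

namespace PGA2

variable {n : ℕ} [NeZero n] {Q : ℝ → Matrix (Fin n) (Fin n) ℝ}

def IsSol (Q : ℝ → Matrix (Fin n) (Fin n) ℝ) (f : ℝ → Fin n → ℝ) : Prop :=
  ∀ t, HasDerivAt f (Q t *ᵥ f t) t

lemma per_int {Q : ℝ → Matrix (Fin n) (Fin n) ℝ} (hQ_per : ∀ t, Q (t + 1) = Q t) :
    ∀ (k : ℤ) (t : ℝ), Q (t + k) = Q t := by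
  intro k
  induction k using Int.induction_on with
  | zero => simp
  | succ m ih =>
      intro t
      have h1 : ((m : ℤ) + 1 : ℤ) = ((m : ℤ) : ℝ) + 1 := by push_cast; ring
      rw [show t + (((m : ℤ) + 1 : ℤ) : ℝ) = (t + (m : ℤ)) + 1 by push_cast; ring,
        hQ_per, ih]
  | pred m ih =>
      intro t
      have h2 := hQ_per (t + ((-(m : ℤ) - 1 : ℤ) : ℝ))
      rw [show t + ((-(m : ℤ) - 1 : ℤ) : ℝ) + 1 = t + ((-(m : ℤ) : ℤ) : ℝ) by push_cast; ring,
        ih] at h2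
      rw [h2.symm]

/-- the bundled continuous linear map of mulVec -/
noncomputable def psi : Matrix (Fin n) (Fin n) ℝ →ₗ[ℝ] ((Fin n → ℝ) →L[ℝ] (Fin n → ℝ)) where
  toFun A := LinearMap.toContinuousLinearMap (Matrix.mulVecLin A)
  map_add' A B := by ext x; simp [Matrix.mulVecLin_add]
  map_smul' r A := by ext x; simp [Matrix.mulVecLin_apply, Matrix.smul_mulVec]

lemma psi_apply (A : Matrix (Fin n) (Fin n) ℝ) (x : Fin n → ℝ) : psi A x = A *ᵥ x := rfl

lemma psi_cont : Continuous (psi : Matrix (Fin n) (Fin n) ℝ →ₗ[ℝ] _) :=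
  LinearMap.continuous_of_finiteDimensional _

lemma exists_bound {Q : ℝ → Matrix (Fin n) (Fin n) ℝ} (hQ_cont : Continuous Q)
    (hQ_per : ∀ t, Q (t + 1) = Q t) :
    ∃ K : ℝ≥0, 1 ≤ (K : ℝ) ∧ (∀ t, LipschitzWith K (fun x => Q t *ᵥ x)) ∧
      (∀ t i j, |Q t i j| ≤ (K : ℝ)) := by
  have hcont : Continuous fun t => ‖psi (Q t)‖ := (psi_cont.comp hQ_cont).norm
  obtain ⟨u, hu, hmax⟩ := isCompact_Icc.exists_isMaxOn (s := Icc (0:ℝ) 1)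
    (nonempty_Icc.2 zero_le_one) hcont.continuousOn
  set B := ‖psi (Q u)‖ with hB
  have hball : ∀ t, ‖psi (Q t)‖ ≤ B := by
    intro t
    have hfr : Q t = Q (Int.fract t) := by
      conv_lhs => rw [show t = Int.fract t + (⌊t⌋ : ℝ) by rw [Int.fract]; ring]
      exact per_int hQ_per ⌊t⌋ (Int.fract t)
    rw [hfr]
    exact hmax ⟨Int.fract_nonneg t, (Int.fract_lt_one t).le⟩
  refine ⟨⟨max B 1, le_trans zero_le_one (le_max_right _ _)⟩, le_max_right _ _, ?_, ?_⟩
  · intro t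
    have h1 : LipschitzWith ‖psi (Q t)‖₊ (psi (Q t)) := (psi (Q t)).lipschitz
    have h2 : ‖psi (Q t)‖₊ ≤ ⟨max B 1, le_trans zero_le_one (le_max_right _ _)⟩ := by
      apply NNReal.coe_le_coe.1
      exact le_trans (hball t) (le_max_left _ _)
    exact (h1.weaken h2)
  · intro t i j
    have h1 : (Q t *ᵥ Pi.single j 1) i = Q t i j := by
      rw [Matrix.mulVec_single]; simp
    have h2 : |Q t i j| ≤ ‖Q t *ᵥ Pi.single j 1‖ := by
      rw [← h1]; exact norm_le_pi_norm (Q t *ᵥ Pi.single j 1) i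
    have h3 : ‖Q t *ᵥ Pi.single j 1‖ ≤ ‖psi (Q t)‖ * ‖(Pi.single j 1 : Fin n → ℝ)‖ :=
      (psi (Q t)).le_opNorm _
    have h4 : ‖(Pi.single j 1 : Fin n → ℝ)‖ = 1 := by
      rw [Pi.norm_single]; simp
    calc |Q t i j| ≤ ‖psi (Q t)‖ * 1 := by rw [← h4]; exact h2.trans h3
    _ ≤ max B 1 := by rw [mul_one]; exact le_trans (hball t) (le_max_left _ _)


noncomputable def eps (K : ℝ≥0) : ℝ := (2*((K:ℝ)+1))⁻¹

lemma eps_pos (K : ℝ≥0) : 0 < eps K := by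
  unfold eps; positivity

lemma mem_nw {t : ℝ} {T S₀ U : Set ℝ} (hU : IsOpen U) (htU : t ∈ U) (hsub : U ∩ T ⊆ S₀) :
    S₀ ∈ nhdsWithin t T :=
  mem_nhdsWithin.2 ⟨U, hU, htU, hsub⟩

lemma transfer {g F : ℝ → Fin n → ℝ} {d : Fin n → ℝ} {S₀ S T : Set ℝ} {t : ℝ}
    (hg : HasDerivWithinAt g d S t) (hsub : S₀ ⊆ S) (heq : Set.EqOn F g S₀) (hts : F t = g t)
    (hmem : S₀ ∈ nhdsWithin t T) : HasDerivWithinAt F d T t :=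
  ((hg.mono hsub).congr (fun y hy => heq hy) hts).mono_of_mem_nhdsWithin hmem

lemma cont_mulVec (hQc : Continuous Q) (x : Fin n → ℝ) :
    Continuous fun t => Q t *ᵥ x := by
  refine continuous_pi fun i => ?_
  have : (fun t => (Q t *ᵥ x) i) = fun t => ∑ j, Q t i j * x j := by
    funext t; simp [Matrix.mulVec, dotProduct]
  rw [this]
  exact continuous_finset_sum _ fun j _ =>
    (((continuous_apply j).comp ((continuous_apply i).comp hQc)).mul continuous_const)

lemma local_exists (K : ℝ≥0) (hK : ∀ t, LipschitzWith K (fun x : Fin n → ℝ => Q t *ᵥ x))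
    (hQc : Continuous Q) (c : ℝ) (x₀ : Fin n → ℝ) :
    ∃ f : ℝ → Fin n → ℝ, f c = x₀ ∧ ∀ t ∈ Icc (c - eps K) (c + eps K),
      HasDerivWithinAt f (Q t *ᵥ f t) (Icc (c - eps K) (c + eps K)) t := by
  have hε := eps_pos K
  have hpl : IsPicardLindelof (fun t x => Q t *ᵥ x) (tmin := c - eps K) (tmax := c + eps K)
      ⟨c, by constructor <;> linarith⟩ x₀ ⟨‖x₀‖ + 1, by positivity⟩ 0
      ⟨(K:ℝ) * (2*‖x₀‖+1), by positivity⟩ K := by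
    constructor
    · exact fun t _ => (hK t).lipschitzOnWith
    · exact fun x _ => (cont_mulVec hQc x).continuousOn
    · intro t _ x hx
      show ‖Q t *ᵥ x‖ ≤ (K:ℝ) * (2*‖x₀‖+1)
      have h1 : ‖Q t *ᵥ x‖ ≤ (K:ℝ) * ‖x‖ := by
        have := (hK t).dist_le_mul x 0
        simpa [Matrix.mulVec_zero, dist_eq_norm] using this
      have h2 : ‖x‖ ≤ 2*‖x₀‖+1 := by
        have := mem_closedBall_iff_norm.1 hx
        change ‖x - x₀‖ ≤ ‖x₀‖ + 1 at this
        have h3 : ‖x‖ ≤ ‖x₀‖ + ‖x - x₀‖ := norm_le_insert' x x₀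
        linarith
      calc ‖Q t *ᵥ x‖ ≤ (K:ℝ) * ‖x‖ := h1
        _ ≤ (K:ℝ) * (2*‖x₀‖+1) := by
            exact mul_le_mul_of_nonneg_left h2 K.coe_nonneg
    · have hmax : max (c + eps K - c) (c - (c - eps K)) = eps K := by
        rw [add_sub_cancel_left, sub_sub_cancel, max_self]
      show (K:ℝ) * (2*‖x₀‖+1) * max (c + eps K - c) (c - (c - eps K)) ≤ (‖x₀‖ + 1) - 0
      rw [hmax, eps, inv_eq_one_div, mul_one_div, div_le_iff₀ (by positivity)]
      nlinarith [norm_nonneg x₀, K.coe_nonneg]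
  obtain ⟨f, hf0, hf⟩ := hpl.exists_eq_forall_mem_Icc_hasDerivWithinAt₀
  exact ⟨f, hf0, hf⟩

lemma glue (K : ℝ≥0) (hK : ∀ t, LipschitzWith K (fun x : Fin n → ℝ => Q t *ᵥ x))
    (hQc : Continuous Q) (s : ℝ) (x₀ : Fin n → ℝ) (m : ℕ) :
    ∃ f : ℝ → Fin n → ℝ, f s = x₀ ∧
      ∀ t ∈ Icc (s - (m+1)*eps K) (s + (m+1)*eps K),
        HasDerivWithinAt f (Q t *ᵥ f t) (Icc (s - (m+1)*eps K) (s + (m+1)*eps K)) t := by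
  induction m with
  | zero =>
    obtain ⟨f, h0, hf⟩ := local_exists K hK hQc s x₀
    refine ⟨f, h0, ?_⟩
    simpa using hf
  | succ m ih =>
    obtain ⟨f, hf0, hf⟩ := ih
    have hε : 0 < eps K := eps_pos K
    set ε := eps K with hεdef
    set cL := s - ((m:ℝ)+1)*ε with hcL
    set cR := s + ((m:ℝ)+1)*ε with hcR
    have hLR : cL < cR := by
      rw [hcL, hcR]; nlinarith [hε]
    obtain ⟨gR, hgR0, hgR⟩ := local_exists K hK hQc cR (f cR)
    obtain ⟨gL, hgL0, hgL⟩ := local_exists K hK hQc cL (f cL)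
    set I := Icc cL cR with hI
    set I' := Icc (cL - ε) (cR + ε) with hI'
    set F : ℝ → Fin n → ℝ := fun t => if t < cL then gL t else if t ≤ cR then f t else gR t
      with hFdef
    have hFf : EqOn F f I := by
      intro t htI
      simp only [hFdef]
      rw [if_neg (not_lt.2 htI.1), if_pos htI.2]
    have hFgR : EqOn F gR (Icc cR (cR + ε)) := by
      intro t htI
      simp only [hFdef]
      rw [if_neg (not_lt.2 (le_trans hLR.le htI.1))]
      rcases lt_or_ge cR t with h | h
      · rw [if_neg (not_le.2 h)]
      · have ht : t = cR := le_antisymm h htI.1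
        rw [if_pos h, ht, hgR0]
    have hFgL : EqOn F gL (Icc (cL - ε) cL) := by
      intro t htI
      simp only [hFdef]
      rcases lt_or_ge t cL with h | h
      · rw [if_pos h]
      · have ht : t = cL := le_antisymm htI.2 h
        rw [if_neg (not_lt.2 h), if_pos (ht.le.trans hLR.le), ht, hgL0]
    have hI'' : Icc (s - (((m+1:ℕ):ℝ)+1)*ε) (s + (((m+1:ℕ):ℝ)+1)*ε) = I' := by
      rw [hI', hcL, hcR]; congr 1 <;> push_cast <;> ring
    have hmain : ∀ t ∈ I', HasDerivWithinAt F (Q t *ᵥ F t) I' t := by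
      intro t ht
      rcases lt_trichotomy t cL with h | h | h
      · -- left open region
        have htm : t ∈ Icc (cL - ε) cL := ⟨ht.1, h.le⟩
        have hts := hFgL htm
        rw [show F t = gL t from hts]
        exact transfer (hgL t ⟨ht.1, by linarith [htm.2]⟩)
          (Icc_subset_Icc_right (by linarith)) hFgL hts
          (mem_nw isOpen_Iio h (fun u hu => ⟨hu.2.1, hu.1.le⟩))
      · -- t = cL junction
        have htI : t ∈ I := ⟨h.ge, h.le.trans hLR.le⟩
        have hts : F t = gL t := hFgL ⟨by linarith, h.le⟩
        have htsf : F t = f t := hFf htI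
        have hleft : HasDerivWithinAt F (Q t *ᵥ F t) (I' ∩ Iic t) t := by
          rw [show F t = gL t from hts]
          refine transfer (hgL t ⟨by linarith, by linarith⟩)
            (Icc_subset_Icc_right (by linarith)) hFgL hts ?_
          refine Filter.mem_of_superset self_mem_nhdsWithin ?_
          intro u hu
          exact ⟨by linarith [show cL - ε ≤ u from hu.1.1],
            by linarith [show u ≤ t from hu.2]⟩
        have hright : HasDerivWithinAt F (Q t *ᵥ F t) (I' ∩ Ici t) t := by
          rw [show F t = f t from htsf]
          exact transfer (hf t htI) Set.Subset.rfl hFf htsf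
            (mem_nw isOpen_Iio (show t < cR by linarith)
              (fun u hu => ⟨by linarith [show t ≤ u from hu.2.2],
                by linarith [show u < cR from hu.1]⟩))
        have := hleft.union hright
        rwa [← Set.inter_union_distrib_left, Set.Iic_union_Ici, Set.inter_univ] at this
      · rcases lt_trichotomy t cR with h2 | h2 | h2
        · -- interior of I
          have htI : t ∈ I := ⟨h.le, h2.le⟩
          have htsf : F t = f t := hFf htI
          rw [show F t = f t from htsf]
          exact transfer (hf t htI) Set.Subset.rfl hFf htsf
            (mem_nw (isOpen_Ioo (a := cL) (b := cR)) ⟨h, h2⟩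
              (fun u hu => ⟨hu.1.1.le, hu.1.2.le⟩))
        · -- t = cR junction
          have htI : t ∈ I := ⟨h.le, h2.le⟩
          have htsf : F t = f t := hFf htI
          have htsR : F t = gR t := hFgR ⟨h2.ge, by linarith⟩
          have hleft : HasDerivWithinAt F (Q t *ᵥ F t) (I' ∩ Iic t) t := by
            rw [show F t = f t from htsf]
            exact transfer (hf t htI) Set.Subset.rfl hFf htsf
              (mem_nw isOpen_Ioi (show cL < t by linarith)
                (fun u hu => ⟨by linarith [show cL < u from hu.1],
                  by linarith [show u ≤ t from hu.2.2]⟩))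
          have hright : HasDerivWithinAt F (Q t *ᵥ F t) (I' ∩ Ici t) t := by
            rw [show F t = gR t from htsR]
            refine transfer (hgR t ⟨by linarith, by linarith⟩)
              (Icc_subset_Icc_left (by linarith)) hFgR htsR ?_
            refine Filter.mem_of_superset self_mem_nhdsWithin ?_
            intro u hu
            exact ⟨by linarith [show t ≤ u from hu.2],
              by linarith [show u ≤ cR + ε from hu.1.2]⟩
          have := hleft.union hright
          rwa [← Set.inter_union_distrib_left, Set.Iic_union_Ici, Set.inter_univ] at this
        · -- right open region
          have htm : t ∈ Icc cR (cR + ε) := ⟨h2.le, ht.2⟩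
          have hts := hFgR htm
          rw [show F t = gR t from hts]
          exact transfer (hgR t ⟨by linarith [htm.1], ht.2⟩)
            (Icc_subset_Icc_left (by linarith)) hFgR hts
            (mem_nw isOpen_Ioi h2 (fun u hu => ⟨hu.1.le, hu.2.2⟩))
    refine ⟨F, ?_, ?_⟩
    · have hsI : s ∈ I := by
        constructor
        · rw [hcL]; nlinarith [hε]
        · rw [hcR]; nlinarith [hε]
      rw [hFf hsI, hf0]
    · intro t ht
      rw [hI''] at ht ⊢
      exact hmain t ht

lemma unique_on_Icc (K : ℝ≥0) (hK : ∀ t, LipschitzWith K (fun x : Fin n → ℝ => Q t *ᵥ x))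
    {f g : ℝ → Fin n → ℝ} {a b s : ℝ} (hs : s ∈ Icc a b)
    (hf : ∀ t ∈ Icc a b, HasDerivWithinAt f (Q t *ᵥ f t) (Icc a b) t)
    (hg : ∀ t ∈ Icc a b, HasDerivWithinAt g (Q t *ᵥ g t) (Icc a b) t)
    (heq : f s = g s) : EqOn f g (Icc a b) := by
  have hfc : ContinuousOn f (Icc a b) := fun t ht => (hf t ht).continuousWithinAt
  have hgc : ContinuousOn g (Icc a b) := fun t ht => (hg t ht).continuousWithinAt
  have hright : EqOn f g (Icc s b) := by
    refine ODE_solution_unique hK (hfc.mono (Icc_subset_Icc_left hs.1)) ?_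
      (hgc.mono (Icc_subset_Icc_left hs.1)) ?_ heq
    all_goals
      intro t ht
      first
      | exact (hf t ⟨hs.1.trans ht.1, ht.2.le⟩).mono_of_mem_nhdsWithin
          (mem_nw isOpen_Iio ht.2 (fun u hu => ⟨by linarith [show t ≤ u from hu.2,
            hs.1, ht.1], by linarith [show u < b from hu.1]⟩))
      | exact (hg t ⟨hs.1.trans ht.1, ht.2.le⟩).mono_of_mem_nhdsWithin
          (mem_nw isOpen_Iio ht.2 (fun u hu => ⟨by linarith [show t ≤ u from hu.2,
            hs.1, ht.1], by linarith [show u < b from hu.1]⟩))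
  have hleft : EqOn f g (Icc a s) := by
    refine ODE_solution_unique_of_mem_Icc_left
      (fun t _ => (hK t).lipschitzOnWith (s := univ))
      (hfc.mono (Icc_subset_Icc_right hs.2)) ?_ (fun _ _ => trivial)
      (hgc.mono (Icc_subset_Icc_right hs.2)) ?_ (fun _ _ => trivial) heq
    all_goals
      intro t ht
      first
      | exact (hf t ⟨ht.1.le, ht.2.trans hs.2⟩).mono_of_mem_nhdsWithin
          (mem_nw isOpen_Ioi ht.1 (fun u hu => ⟨by linarith [show a < u from hu.1],
            by linarith [show u ≤ t from hu.2, ht.2, hs.2]⟩))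
      | exact (hg t ⟨ht.1.le, ht.2.trans hs.2⟩).mono_of_mem_nhdsWithin
          (mem_nw isOpen_Ioi ht.1 (fun u hu => ⟨by linarith [show a < u from hu.1],
            by linarith [show u ≤ t from hu.2, ht.2, hs.2]⟩))
  intro t ht
  rcases le_total t s with h | h
  · exact hleft ⟨ht.1, h⟩
  · exact hright ⟨h, ht.2⟩

lemma exists_sol (K : ℝ≥0) (hK : ∀ t, LipschitzWith K (fun x : Fin n → ℝ => Q t *ᵥ x))
    (hQc : Continuous Q) (s : ℝ) (x₀ : Fin n → ℝ) :
    ∃ f : ℝ → Fin n → ℝ, f s = x₀ ∧ IsSol Q f := by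
  have hε := eps_pos K
  set ε := eps K with hεdef
  have hch : ∀ m : ℕ, ∃ f : ℝ → Fin n → ℝ, f s = x₀ ∧
      ∀ t ∈ Icc (s - (m+1)*ε) (s + (m+1)*ε),
        HasDerivWithinAt f (Q t *ᵥ f t) (Icc (s - (m+1)*ε) (s + (m+1)*ε)) t :=
    glue K hK hQc s x₀
  choose g hg0 hgd using hch
  set I : ℕ → Set ℝ := fun m => Icc (s - (m+1)*ε) (s + (m+1)*ε) with hIdef
  have hsI : ∀ m, s ∈ I m := by
    intro m
    have h0 : (0:ℝ) ≤ ((m:ℝ)+1)*ε := by positivity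
    exact ⟨by linarith, by linarith⟩
  have hImono : ∀ {m m' : ℕ}, m ≤ m' → I m ⊆ I m' := by
    intro m m' hmm
    have : ((m:ℝ)+1)*ε ≤ ((m':ℝ)+1)*ε := by
      have : (m:ℝ) ≤ (m':ℝ) := Nat.cast_le.2 hmm
      nlinarith
    exact Icc_subset_Icc (by linarith) (by linarith)
  have hcons : ∀ m m' t, t ∈ I m → t ∈ I m' → g m t = g m' t := by
    have key : ∀ m m', m ≤ m' → ∀ t, t ∈ I m → g m t = g m' t := by
      intro m m' hmm t ht
      refine unique_on_Icc K hK (hsI m) (hgd m) ?_ (by rw [hg0 m, hg0 m']) ht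
      intro u hu
      exact ((hgd m' u (hImono hmm hu)).mono (hImono hmm))
    intro m m' t ht ht'
    rcases le_total m m' with h | h
    · exact key m m' h t ht
    · exact (key m' m h t ht').symm
  have hmem : ∀ t : ℝ, ∀ m : ℕ, |t - s| ≤ ((m:ℝ))*ε → t ∈ I m := by
    intro t m h
    have h1 := abs_le.1 h
    have : ((m:ℝ))*ε ≤ ((m:ℝ)+1)*ε := by nlinarith
    exact ⟨by linarith [h1.1], by linarith [h1.2]⟩
  set N : ℝ → ℕ := fun t => Nat.ceil (|t - s| / ε) with hNdef
  have hNle : ∀ t, |t - s| ≤ (N t : ℝ) * ε := by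
    intro t
    have := Nat.le_ceil (|t - s| / ε)
    calc |t - s| = (|t - s| / ε) * ε := by field_simp
      _ ≤ (N t : ℝ) * ε := by
          exact mul_le_mul_of_nonneg_right this hε.le
  refine ⟨fun t => g (N t) t, by simp only [hg0], ?_⟩
  intro t
  set m := N t with hm
  have htIoo : t ∈ Ioo (s - ((m:ℝ)+1)*ε) (s + ((m:ℝ)+1)*ε) := by
    have := abs_le.1 (hNle t)
    constructor <;> nlinarith
  have hnb : I m ∈ nhds t := by
    rw [hIdef]
    exact Icc_mem_nhds htIoo.1 htIoo.2
  have heqon : ∀ u ∈ I m, (fun t => g (N t) t) u = g m u := by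
    intro u hu
    exact hcons (N u) m u (hmem u (N u) (hNle u)) hu
  have hgm : HasDerivAt (g m) (Q t *ᵥ g m t) t :=
    (hgd m t (Ioo_subset_Icc_self htIoo)).hasDerivAt hnb
  have : HasDerivAt (fun t => g (N t) t) (Q t *ᵥ g m t) t :=
    hgm.congr_of_eventuallyEq (Filter.eventuallyEq_of_mem hnb heqon)
  exact this

lemma sol_unique (K : ℝ≥0) (hK : ∀ t, LipschitzWith K (fun x : Fin n → ℝ => Q t *ᵥ x))
    {f g : ℝ → Fin n → ℝ} (hf : IsSol Q f) (hg : IsSol Q g) {s : ℝ} (h : f s = g s) :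
    f = g := by
  funext t
  have hab : s ∈ Ioo (min s t - 1) (max s t + 1) :=
    ⟨by nlinarith [min_le_left s t], by nlinarith [le_max_left s t]⟩
  have := ODE_solution_unique_of_mem_Ioo (s := fun _ => (univ : Set (Fin n → ℝ)))
    (fun u _ => (hK u).lipschitzOnWith) hab
    (fun u _ => ⟨hf u, trivial⟩) (fun u _ => ⟨hg u, trivial⟩) h
  exact this ⟨by nlinarith [min_le_right s t], by nlinarith [le_max_right s t]⟩

section Analytic

variable (K : ℝ≥0)

lemma comp_deriv {f : ℝ → Fin n → ℝ} (hf : IsSol Q f) (i : Fin n) (t : ℝ) :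
    HasDerivAt (fun u => f u i) ((Q t *ᵥ f t) i) t :=
  (hasDerivAt_pi.1 (hf t)) i

lemma comp_cont {f : ℝ → Fin n → ℝ} (hf : IsSol Q f) (i : Fin n) :
    Continuous (fun u => f u i) :=
  continuous_iff_continuousAt.2 fun t => (comp_deriv hf i t).continuousAt

lemma sol_cont {f : ℝ → Fin n → ℝ} (hf : IsSol Q f) : Continuous f :=
  continuous_iff_continuousAt.2 fun t => (hf t).continuousAt

lemma const_of_deriv0 {φ : ℝ → ℝ} (h : ∀ u, HasDerivAt φ 0 u) (a b : ℝ) : φ a = φ b := by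
  have key : ∀ p q : ℝ, p ≤ q → φ q = φ p := by
    intro p q hpq
    exact constant_of_has_deriv_right_zero
      (continuous_iff_continuousAt.2 fun t => (h t).continuousAt).continuousOn
      (fun x _ => (h x).hasDerivWithinAt) q ⟨hpq, le_refl q⟩
  rcases le_total a b with hab | hab
  · exact (key a b hab).symm
  · exact key b a hab

lemma mono_le {φ ψ : ℝ → ℝ} {a b : ℝ} (hab : a ≤ b)
    (hφ : ∀ u, HasDerivAt φ (ψ u) u) (hψ : ∀ u ∈ Ioo a b, 0 ≤ ψ u) : φ a ≤ φ b := by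
  have hmono : MonotoneOn φ (Icc a b) := by
    refine monotoneOn_of_deriv_nonneg (convex_Icc a b)
      (continuous_iff_continuousAt.2 fun t => (hφ t).continuousAt).continuousOn
      (fun x _ => ((hφ x).differentiableAt.differentiableWithinAt)) ?_
    intro x hx
    rw [interior_Icc] at hx
    rw [(hφ x).deriv]
    exact hψ x hx
  exact hmono ⟨le_refl a, hab⟩ ⟨hab, le_refl b⟩ hab

lemma sum_const (hcol : ∀ t j, ∑ i, Q t i j = 0) {f : ℝ → Fin n → ℝ} (hf : IsSol Q f)
    (a b : ℝ) : ∑ i, f a i = ∑ i, f b i := by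
  refine const_of_deriv0 (φ := fun u => ∑ i, f u i) ?_ a b
  intro u
  have h1 : HasDerivAt (fun u => ∑ i, f u i) (∑ i, (Q u *ᵥ f u) i) u :=
    HasDerivAt.fun_sum (fun i _ => comp_deriv hf i u)
  convert h1 using 1
  have h2 : ∀ i, (Q u *ᵥ f u) i = ∑ j, Q u i j * f u j := by
    intro i; simp [Matrix.mulVec, dotProduct]
  rw [show (∑ i, (Q u *ᵥ f u) i) = ∑ i, ∑ j, Q u i j * f u j from
    Finset.sum_congr rfl fun i _ => h2 i, Finset.sum_comm]
  symm
  refine Finset.sum_eq_zero fun j _ => ?_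
  rw [← Finset.sum_mul, hcol u j, zero_mul]

lemma gronwall_sol (hK : ∀ t, LipschitzWith K (fun x : Fin n → ℝ => Q t *ᵥ x))
    {f g : ℝ → Fin n → ℝ} (hf : IsSol Q f) (hg : IsSol Q g) {a t : ℝ} (h : a ≤ t) :
    dist (f t) (g t) ≤ dist (f a) (g a) * Real.exp (K * (t - a)) := by
  refine dist_le_of_trajectories_ODE hK
    ((sol_cont hf).continuousOn) (fun u _ => (hf u).hasDerivWithinAt)
    ((sol_cont hg).continuousOn) (fun u _ => (hg u).hasDerivWithinAt)
    (le_refl _) t ⟨h, le_refl t⟩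

lemma key_ineq (hoff : ∀ t i j, i ≠ j → 0 ≤ Q t i j)
    (hb : ∀ t i j, |Q t i j| ≤ (K:ℝ)) (t : ℝ) (x : Fin n → ℝ) (hx : ∀ j, 0 ≤ x j)
    (i : Fin n) : 0 ≤ (K:ℝ) * x i + (Q t *ᵥ x) i := by
  have h2 : (Q t *ᵥ x) i = ∑ j, Q t i j * x j := by
    simp [Matrix.mulVec, dotProduct]
  have h3 : ∑ j, Q t i j * x j = Q t i i * x i + ∑ j ∈ Finset.univ.erase i, Q t i j * x j := by
    rw [← Finset.add_sum_erase _ _ (Finset.mem_univ i)]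
  have h4 : 0 ≤ ∑ j ∈ Finset.univ.erase i, Q t i j * x j := by
    refine Finset.sum_nonneg fun j hj => ?_
    exact mul_nonneg (hoff t i j (Ne.symm (Finset.ne_of_mem_erase hj))) (hx j)
  have h5 : -(K:ℝ) ≤ Q t i i := neg_le_of_abs_le (hb t i i)
  nlinarith [hx i, mul_le_mul_of_nonneg_right h5 (hx i)]

lemma exp_mul_deriv {f : ℝ → Fin n → ℝ} (hf : IsSol Q f) (i : Fin n) (t : ℝ) :
    HasDerivAt (fun u => Real.exp ((K:ℝ)*u) * f u i)
      (Real.exp ((K:ℝ)*t) * ((K:ℝ) * f t i + (Q t *ᵥ f t) i)) t := by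
  have h1 : HasDerivAt (fun u : ℝ => (K:ℝ)*u) (K:ℝ) t := by
    simpa using (hasDerivAt_id t).const_mul (K:ℝ)
  have h2 : HasDerivAt (fun u => Real.exp ((K:ℝ)*u)) (Real.exp ((K:ℝ)*t) * (K:ℝ)) t := h1.exp
  have h3 := h2.fun_mul (comp_deriv hf i t)
  exact h3.congr_deriv (by ring)

lemma pos_inv (hoff : ∀ t i j, i ≠ j → 0 ≤ Q t i j) (hb : ∀ t i j, |Q t i j| ≤ (K:ℝ))
    {f : ℝ → Fin n → ℝ} (hf : IsSol Q f) {a b : ℝ} (hab : a ≤ b)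
    (hpos : ∀ i, 0 < f a i) : ∀ i, 0 < f b i := by
  by_contra hcon
  push_neg at hcon
  set B := {u ∈ Icc a b | ∃ j, f u j ≤ 0} with hB
  have hBne : B.Nonempty := by
    obtain ⟨i, hi⟩ := hcon
    exact ⟨b, ⟨⟨hab, le_refl b⟩, ⟨i, hi⟩⟩⟩
  have hBclosed : IsClosed B := by
    have : B = Icc a b ∩ (⋃ j : Fin n, {u | f u j ≤ 0}) := by
      ext u; simp [hB, Set.mem_iUnion]
    rw [this]
    exact isClosed_Icc.inter (isClosed_iUnion_of_finite fun j =>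
      isClosed_le (comp_cont hf j) continuous_const)
  have hBbdd : BddBelow B := ⟨a, fun u hu => hu.1.1⟩
  set τ := sInf B with hτ
  have hτB : τ ∈ B := hBclosed.csInf_mem hBne hBbdd
  have hτa : a < τ := by
    rcases lt_or_ge a τ with h | h
    · exact h
    · exfalso
      have : τ = a := le_antisymm h hτB.1.1
      obtain ⟨j, hj⟩ := hτB.2
      rw [this] at hj
      exact absurd hj (not_le.2 (hpos j))
  have hpre : ∀ u ∈ Ico a τ, ∀ j, 0 < f u j := by
    intro u hu j
    by_contra hneg
    push_neg at hneg
    have huB : u ∈ B := ⟨⟨hu.1, hu.2.le.trans hτB.1.2⟩, ⟨j, hneg⟩⟩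
    exact absurd (csInf_le hBbdd huB) (not_le.2 hu.2)
  obtain ⟨j, hj⟩ := hτB.2
  have hmono : Real.exp ((K:ℝ)*a) * f a j ≤ Real.exp ((K:ℝ)*τ) * f τ j := by
    refine mono_le hτa.le (exp_mul_deriv K hf j) ?_
    intro u hu
    have hnn : ∀ i, 0 ≤ f u i := fun i => (hpre u ⟨hu.1.le, hu.2⟩ i).le
    exact mul_nonneg (Real.exp_nonneg _) (key_ineq K hoff hb u (f u) hnn j)
  nlinarith [hpos j, Real.exp_pos ((K:ℝ)*a), Real.exp_pos ((K:ℝ)*τ),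
    mul_nonpos_of_nonneg_of_nonpos (Real.exp_pos ((K:ℝ)*τ)).le hj]

lemma nonneg_inv (hK : ∀ t, LipschitzWith K (fun x : Fin n → ℝ => Q t *ᵥ x))
    (hQc : Continuous Q)
    (hoff : ∀ t i j, i ≠ j → 0 ≤ Q t i j) (hb : ∀ t i j, |Q t i j| ≤ (K:ℝ))
    {f : ℝ → Fin n → ℝ} (hf : IsSol Q f) {a b : ℝ} (hab : a ≤ b)
    (h0 : ∀ i, 0 ≤ f a i) : ∀ i, 0 ≤ f b i := by
  intro i
  set C := Real.exp ((K:ℝ) * (b - a)) with hC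
  have hCpos : 0 < C := Real.exp_pos _
  have key : ∀ δ > (0:ℝ), 0 ≤ f b i + δ := by
    intro δ hδ
    set ε := δ / C with hε
    have hεpos : 0 < ε := div_pos hδ hCpos
    obtain ⟨g, hg0, hg⟩ := exists_sol K hK hQc a (f a + fun _ => ε)
    have hgpos : ∀ k, 0 < g a k := by
      intro k
      rw [hg0]
      have := h0 k
      simp only [Pi.add_apply]
      linarith
    have hgb := pos_inv K hoff hb hg hab hgpos
    have hdist : dist (f b) (g b) ≤ ε * C := by
      have h1 := gronwall_sol K hK hf hg hab
      have h2 : dist (f a) (g a) = ε := by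
        rw [hg0, dist_eq_norm, show f a - (f a + fun _ => ε) = fun _ => -ε by funext k; simp,
          pi_norm_const (-ε)]
        simp [abs_of_pos hεpos]
      rw [h2] at h1
      exact h1
    have h3 : |f b i - g b i| ≤ dist (f b) (g b) := by
      rw [dist_eq_norm]
      exact norm_le_pi_norm (f b - g b) i
    have h4 : ε * C = δ := by
      rw [hε]; field_simp
    have := abs_le.1 (h3.trans hdist)
    have h5 := hgb i
    rw [h4] at this
    linarith [this.1]
  by_contra hneg
  push_neg at hneg
  have := key (-(f b i)/2) (by linarith)
  linarith

lemma decay (hoff : ∀ t i j, i ≠ j → 0 ≤ Q t i j) (hb : ∀ t i j, |Q t i j| ≤ (K:ℝ))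
    {f : ℝ → Fin n → ℝ} (hf : IsSol Q f) {r u : ℝ} (hru : r ≤ u)
    (hnn : ∀ w ∈ Icc r u, ∀ j, 0 ≤ f w j) (i : Fin n) :
    Real.exp (-(K:ℝ)*(u-r)) * f r i ≤ f u i := by
  have hmono : Real.exp ((K:ℝ)*r) * f r i ≤ Real.exp ((K:ℝ)*u) * f u i := by
    refine mono_le hru (exp_mul_deriv K hf i) ?_
    intro w hw
    exact mul_nonneg (Real.exp_nonneg _)
      (key_ineq K hoff hb w (f w) (hnn w ⟨hw.1.le, hw.2.le⟩) i)
  have hexp : Real.exp (-(K:ℝ)*(u-r)) * Real.exp ((K:ℝ)*u) = Real.exp ((K:ℝ)*r) := by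
    rw [← Real.exp_add]; congr 1; ring
  have h2 := mul_le_mul_of_nonneg_left hmono (Real.exp_nonneg (-(K:ℝ)*(u-r)))
  rw [← mul_assoc, ← mul_assoc, hexp] at h2
  nlinarith [Real.exp_pos ((K:ℝ)*u), Real.exp_pos (-(K:ℝ)*(u-r)),
    Real.exp_pos ((K:ℝ)*r)]

end Analytic

section Feed

variable (K : ℝ≥0)

lemma feed (hoff : ∀ t i j, i ≠ j → 0 ≤ Q t i j) (hb : ∀ t i j, |Q t i j| ≤ (K:ℝ))
    {f : ℝ → Fin n → ℝ} (hf : IsSol Q f) {r u : ℝ} (hru : r < u) {j : Fin n}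
    (hne : j - 1 ≠ j) {c : ℝ} (hc : 0 < c)
    (hcQ : ∀ w ∈ Ioo r u, c ≤ Q w j (j-1))
    (hnn : ∀ w ∈ Icc r u, ∀ i, 0 ≤ f w i) :
    c * (u - r) * Real.exp (-(K:ℝ)*(u-r)) * (Real.exp (-(K:ℝ)*(u-r)) * f r (j-1)) ≤ f u j := by
  have hfr : 0 ≤ f r (j-1) := hnn r ⟨le_refl r, hru.le⟩ (j-1)
  have ha0 : 0 ≤ Real.exp (-(K:ℝ)*(u-r)) * f r (j-1) :=
    mul_nonneg (Real.exp_nonneg _) hfr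
  have hlow : ∀ w ∈ Ioo r u, Real.exp (-(K:ℝ)*(u-r)) * f r (j-1) ≤ f w (j-1) := by
    intro w hw
    have h1 : Real.exp (-(K:ℝ)*(w-r)) * f r (j-1) ≤ f w (j-1) :=
      decay K hoff hb hf hw.1.le
        (fun v hv => hnn v ⟨hv.1, hv.2.trans hw.2.le⟩) (j-1)
    have h2 : Real.exp (-(K:ℝ)*(u-r)) ≤ Real.exp (-(K:ℝ)*(w-r)) := by
      apply Real.exp_le_exp.2
      nlinarith [K.coe_nonneg, hw.2]
    nlinarith [mul_le_mul_of_nonneg_right h2 hfr]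
  -- derivative bound along the chain
  have hψ : ∀ w ∈ Ioo r u,
      c * (Real.exp (-(K:ℝ)*(u-r)) * f r (j-1)) * Real.exp ((K:ℝ)*r) ≤
        Real.exp ((K:ℝ)*w) * ((K:ℝ) * f w j + (Q w *ᵥ f w) j) := by
    intro w hw
    have hnnw : ∀ i, 0 ≤ f w i := hnn w ⟨hw.1.le, hw.2.le⟩
    have hQfj : (Q w *ᵥ f w) j = ∑ k, Q w j k * f w k := by
      simp [Matrix.mulVec, dotProduct]
    have hsplit : ∑ k, Q w j k * f w k
        = Q w j j * f w j + ∑ k ∈ Finset.univ.erase j, Q w j k * f w k := by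
      rw [← Finset.add_sum_erase _ _ (Finset.mem_univ j)]
    have hsingle : Q w j (j-1) * f w (j-1) ≤ ∑ k ∈ Finset.univ.erase j, Q w j k * f w k := by
      refine Finset.single_le_sum (f := fun k => Q w j k * f w k) ?_ ?_
      · intro k hk
        exact mul_nonneg (hoff w j k (Ne.symm (Finset.ne_of_mem_erase hk))) (hnnw k)
      · exact Finset.mem_erase.2 ⟨hne, Finset.mem_univ _⟩
    have hterm : c * (Real.exp (-(K:ℝ)*(u-r)) * f r (j-1)) ≤ Q w j (j-1) * f w (j-1) := by
      have h1 := hlow w hw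
      have h2 := hcQ w hw
      have h3 : 0 ≤ f w (j-1) := hnnw (j-1)
      nlinarith
    have hKjj : -(K:ℝ) ≤ Q w j j := neg_le_of_abs_le (hb w j j)
    have hcore : c * (Real.exp (-(K:ℝ)*(u-r)) * f r (j-1)) ≤
        (K:ℝ) * f w j + (Q w *ᵥ f w) j := by
      rw [hQfj, hsplit]
      nlinarith [hnnw j, mul_le_mul_of_nonneg_right hKjj (hnnw j)]
    have hexpw : Real.exp ((K:ℝ)*r) ≤ Real.exp ((K:ℝ)*w) := by
      apply Real.exp_le_exp.2
      nlinarith [K.coe_nonneg, hw.1]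
    have hpos0 : 0 ≤ c * (Real.exp (-(K:ℝ)*(u-r)) * f r (j-1)) := mul_nonneg hc.le ha0
    calc c * (Real.exp (-(K:ℝ)*(u-r)) * f r (j-1)) * Real.exp ((K:ℝ)*r)
        ≤ c * (Real.exp (-(K:ℝ)*(u-r)) * f r (j-1)) * Real.exp ((K:ℝ)*w) := by
          exact mul_le_mul_of_nonneg_left hexpw hpos0
      _ ≤ Real.exp ((K:ℝ)*w) * ((K:ℝ) * f w j + (Q w *ᵥ f w) j) := by
          rw [mul_comm]
          exact mul_le_mul_of_nonneg_left hcore (Real.exp_nonneg _)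
  set A := c * (Real.exp (-(K:ℝ)*(u-r)) * f r (j-1)) * Real.exp ((K:ℝ)*r) with hA
  have hmono : Real.exp ((K:ℝ)*r) * f r j - A * r ≤ Real.exp ((K:ℝ)*u) * f u j - A * u := by
    refine mono_le (φ := fun w => Real.exp ((K:ℝ)*w) * f w j - A * w)
      (ψ := fun w => Real.exp ((K:ℝ)*w) * ((K:ℝ) * f w j + (Q w *ᵥ f w) j) - A) hru.le ?_ ?_
    · intro w
      have h1 := exp_mul_deriv K hf j w
      have h2 : HasDerivAt (fun w : ℝ => A * w) A w := by
        simpa using (hasDerivAt_id w).const_mul A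
      exact h1.sub h2
    · intro w hw
      have := hψ w hw
      linarith
  have hfrj : 0 ≤ f r j := hnn r ⟨le_refl r, hru.le⟩ j
  have h8 : A * (u - r) ≤ Real.exp ((K:ℝ)*u) * f u j := by
    nlinarith [mul_nonneg (Real.exp_nonneg ((K:ℝ)*r)) hfrj]
  have h9 := mul_le_mul_of_nonneg_left h8 (Real.exp_nonneg (-(K:ℝ)*u))
  have hinv : Real.exp (-(K:ℝ)*u) * Real.exp ((K:ℝ)*u) = 1 := by
    rw [← Real.exp_add]; norm_num
  have hEE : Real.exp (-(K:ℝ)*u) * Real.exp ((K:ℝ)*r) = Real.exp (-(K:ℝ)*(u-r)) := by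
    rw [← Real.exp_add]; congr 1; ring
  have h10 : Real.exp (-(K:ℝ)*u) * (Real.exp ((K:ℝ)*u) * f u j) = f u j := by
    rw [← mul_assoc, hinv, one_mul]
  have h11 : Real.exp (-(K:ℝ)*u) * (A * (u - r))
      = c * (u - r) * Real.exp (-(K:ℝ)*(u-r)) * (Real.exp (-(K:ℝ)*(u-r)) * f r (j-1)) := by
    rw [hA, ← hEE]; ring
  rw [h10, h11] at h9
  exact h9

open Fin.CommRing in
lemma doeblin (hK : ∀ t, LipschitzWith K (fun x : Fin n → ℝ => Q t *ᵥ x))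
    (hQc : Continuous Q)
    (hcol : ∀ t j, ∑ i, Q t i j = 0)
    (hoff : ∀ t i j, i ≠ j → 0 ≤ Q t i j) (hb : ∀ t i j, |Q t i j| ≤ (K:ℝ))
    {t₀ t₁ : ℝ} (ht₀ : 0 ≤ t₀) (ht : t₀ < t₁) (ht₁ : t₁ ≤ 1)
    {c : ℝ} (hc : 0 < c)
    (hsub : ∀ t ∈ Set.Ioo t₀ t₁, ∀ j : Fin n, c ≤ Q t j (j - 1))
    (hn2 : 2 ≤ n) :
    ∃ δ > (0:ℝ), ∀ f : ℝ → Fin n → ℝ, IsSol Q f → (∀ i, 0 ≤ f 0 i) →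
      (∑ i, f 0 i) = 1 → ∀ j, δ ≤ f 1 j := by
  have hnpos : 0 < (n:ℝ) := by positivity
  set a : ℝ := (2*t₀+t₁)/3 with hadef
  set b : ℝ := (t₀+2*t₁)/3 with hbdef
  have hta : t₀ < a := by rw [hadef]; linarith
  have hab : a < b := by rw [hadef, hbdef]; linarith
  have hbt : b < t₁ := by rw [hbdef]; linarith
  have ha0 : 0 ≤ a := le_trans ht₀ hta.le
  have hb1 : b ≤ 1 := le_trans hbt.le ht₁
  set h : ℝ := (b - a)/n with hhdef
  have hhpos : 0 < h := by rw [hhdef]; exact div_pos (by linarith) hnpos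
  have hh1 : h ≤ 1 := by
    rw [hhdef]
    rw [div_le_one hnpos]
    have : (1:ℝ) ≤ (n:ℝ) := by exact_mod_cast Nat.one_le_iff_ne_zero.2 (NeZero.ne n)
    nlinarith
  set β : ℝ := min (c * h * Real.exp (-(K:ℝ)) * Real.exp (-(K:ℝ))) (Real.exp (-(K:ℝ))) with hβ
  have hβpos : 0 < β := by
    rw [hβ]
    refine lt_min ?_ (Real.exp_pos _)
    have e1 := Real.exp_pos (-(K:ℝ))
    positivity
  have hβ1 : β ≤ 1 := by
    rw [hβ]
    refine le_trans (min_le_right _ _) ?_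
    rw [Real.exp_le_one_iff]
    simp [K.coe_nonneg]
  refine ⟨Real.exp (-(K:ℝ)) * (β^n / n), by positivity, ?_⟩
  intro f hf h0 h1 ℓ
  -- nonnegativity everywhere ≥ 0
  have hnn : ∀ w : ℝ, 0 ≤ w → ∀ i, 0 ≤ f w i := fun w hw =>
    nonneg_inv K hK hQc hoff hb hf hw h0
  -- pigeonhole at time a
  have hsuma : ∑ i, f a i = 1 := by rw [← sum_const hcol hf 0 a, h1]
  have hpig : ∃ k : Fin n, 1/(n:ℝ) ≤ f a k := by
    by_contra hcon
    push_neg at hcon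
    have : ∑ i : Fin n, f a i < ∑ i : Fin n, 1/(n:ℝ) :=
      Finset.sum_lt_sum_of_nonempty (Finset.univ_nonempty) (fun i _ => hcon i)
    rw [hsuma, Finset.sum_const, Finset.card_univ, Fintype.card_fin] at this
    rw [nsmul_eq_mul, mul_one_div, div_self (ne_of_gt hnpos)] at this
    exact lt_irrefl 1 this
  obtain ⟨k, hk⟩ := hpig
  -- the grid
  set r : ℕ → ℝ := fun i => a + i * h with hr
  have hrmono : ∀ i : ℕ, r i < r (i+1) := by
    intro i
    rw [hr]
    simp only
    push_cast
    nlinarith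
  have hrange : ∀ i : ℕ, i ≤ n → a ≤ r i ∧ r i ≤ b := by
    intro i hi
    constructor
    · rw [hr]; simp only; nlinarith [Nat.cast_nonneg (α := ℝ) i]
    · rw [hr]; simp only
      have h1 : (i:ℝ) ≤ (n:ℝ) := by exact_mod_cast hi
      have hnh : (n:ℝ)*h = b - a := by
        rw [hhdef]; field_simp
      nlinarith
  have hr0 : r 0 = a := by rw [hr]; simp
  have hgap : ∀ i : ℕ, r (i+1) - r i = h := by
    intro i; rw [hr]; push_cast; ring
  have honeFin : (1 : Fin n) ≠ 0 := by
    intro hcon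
    have h2 : ((1 : Fin n) : ℕ) = ((0 : Fin n) : ℕ) := congrArg Fin.val hcon
    rw [Fin.val_zero, Fin.val_one' n] at h2
    rw [Nat.mod_eq_of_lt hn2] at h2
    omega
  have hneFin : ∀ j : Fin n, j - 1 ≠ j := by
    intro j hcon
    apply honeFin
    linear_combination -hcon
  have hEbound : Real.exp (-(K:ℝ)) ≤ Real.exp (-(K:ℝ)*h) := by
    apply Real.exp_le_exp.2
    nlinarith [K.coe_nonneg]
  have hind : ∀ i : ℕ, i ≤ n → β^i * (1/(n:ℝ)) ≤ f (r i) (k + (i:Fin n)) := by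
    intro i
    induction i with
    | zero =>
      intro _
      have : k + ((0:ℕ):Fin n) = k := by
        rw [Nat.cast_zero, add_zero]
      rw [this, hr0]
      simpa using hk
    | succ i ih =>
      intro hin
      have hi : i < n := Nat.lt_of_succ_le hin
      have hprev := ih hi.le
      set j : Fin n := k + ((i+1:ℕ):Fin n) with hjdef
      have hj1 : j - 1 = k + (i:Fin n) := by
        rw [hjdef]
        push_cast
        ring
      have hIoo : Ioo (r i) (r (i+1)) ⊆ Ioo t₀ t₁ := by
        intro w hw
        have hra := (hrange i hi.le).1
        have hrb := (hrange (i+1) hin).2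
        exact ⟨lt_of_lt_of_le hta (le_trans hra hw.1.le),
          lt_of_le_of_lt (le_trans hw.2.le hrb) hbt⟩
      have hcQ' : ∀ w ∈ Ioo (r i) (r (i+1)), c ≤ Q w j (j-1) := fun w hw =>
        hsub w (hIoo hw) j
      have hnn' : ∀ w ∈ Icc (r i) (r (i+1)), ∀ i', 0 ≤ f w i' := by
        intro w hw
        exact hnn w (le_trans (le_trans ha0 (hrange i hi.le).1) hw.1)
      have hfeed := feed K hoff hb hf (hrmono i) (hneFin j) hc hcQ' hnn'
      rw [hj1] at hfeed
      rw [hgap i] at hfeed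
      have hfpos : 0 ≤ f (r i) (k + (i:Fin n)) := hnn (r i)
        (le_trans ha0 (hrange i hi.le).1) _
      have hββ : β ≤ c * h * Real.exp (-(K:ℝ)*h) * Real.exp (-(K:ℝ)*h) := by
        have h1 : c * h * Real.exp (-(K:ℝ)) * Real.exp (-(K:ℝ)) ≤
            c * h * Real.exp (-(K:ℝ)*h) * Real.exp (-(K:ℝ)*h) := by
          have e0 := Real.exp_nonneg (-(K:ℝ))
          have e1 := Real.exp_nonneg (-(K:ℝ)*h)
          nlinarith [mul_pos hc hhpos, mul_le_mul hEbound hEbound e0 e1]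
        exact le_trans (min_le_left _ _) h1
      have hchain : β * f (r i) (k + (i:Fin n)) ≤ f (r (i+1)) j := by
        have h2 : β * f (r i) (k + (i:Fin n)) ≤
            (c * h * Real.exp (-(K:ℝ)*h) * Real.exp (-(K:ℝ)*h)) * f (r i) (k + (i:Fin n)) :=
          mul_le_mul_of_nonneg_right hββ hfpos
        refine le_trans h2 ?_
        calc (c * h * Real.exp (-(K:ℝ)*h) * Real.exp (-(K:ℝ)*h)) * f (r i) (k + (i:Fin n))
            = c * h * Real.exp (-(K:ℝ)*h) * (Real.exp (-(K:ℝ)*h) * f (r i) (k + (i:Fin n))) := by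
              ring
          _ ≤ f (r (i+1)) j := hfeed
      calc β^(i+1) * (1/(n:ℝ)) = β * (β^i * (1/(n:ℝ))) := by ring
        _ ≤ β * f (r i) (k + (i:Fin n)) := mul_le_mul_of_nonneg_left hprev hβpos.le
        _ ≤ f (r (i+1)) j := hchain
  -- conclude for the target index ℓ
  set i : ℕ := ((ℓ - k : Fin n)).val with hidef
  have hilt : i < n := (ℓ - k).is_lt
  have hki : k + (i : Fin n) = ℓ := by
    rw [hidef, Fin.cast_val_eq_self]
    ring
  have h1 : β^i * (1/(n:ℝ)) ≤ f (r i) ℓ := by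
    rw [← hki]
    exact hind i hilt.le
  have h2 : β^n ≤ β^i := pow_le_pow_of_le_one hβpos.le hβ1 hilt.le
  have hri1 : r i ≤ 1 := le_trans (hrange i hilt.le).2 hb1
  have hra0 : 0 ≤ r i := le_trans ha0 (hrange i hilt.le).1
  have hdec : Real.exp (-(K:ℝ)*(1 - r i)) * f (r i) ℓ ≤ f 1 ℓ :=
    decay K hoff hb hf hri1 (fun w hw => hnn w (le_trans hra0 hw.1)) ℓ
  have hexp2 : Real.exp (-(K:ℝ)) ≤ Real.exp (-(K:ℝ)*(1 - r i)) := by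
    apply Real.exp_le_exp.2
    nlinarith [K.coe_nonneg]
  have hfpos : 0 ≤ f (r i) ℓ := hnn (r i) hra0 ℓ
  have hbn : (0:ℝ) ≤ β^n * (1/(n:ℝ)) := by positivity
  calc Real.exp (-(K:ℝ)) * (β^n / (n:ℝ))
      = Real.exp (-(K:ℝ)) * (β^n * (1/(n:ℝ))) := by ring
    _ ≤ Real.exp (-(K:ℝ)*(1 - r i)) * (β^i * (1/(n:ℝ))) := by
        have hb2 : β^n * (1/(n:ℝ)) ≤ β^i * (1/(n:ℝ)) := by
          have : (0:ℝ) ≤ 1/(n:ℝ) := by positivity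
          nlinarith
        exact mul_le_mul hexp2 hb2 hbn (Real.exp_nonneg _)
    _ ≤ Real.exp (-(K:ℝ)*(1 - r i)) * f (r i) ℓ :=
        mul_le_mul_of_nonneg_left (le_trans (by nlinarith [Real.exp_nonneg (-(K:ℝ)*(1-r i))]) h1)
          (Real.exp_nonneg _)
    _ ≤ f 1 ℓ := hdec

end Feed

section Master

variable (K : ℝ≥0)

lemma abs_sub_le_add {p q : ℝ} (hp : 0 ≤ p) (hq : 0 ≤ q) : |p - q| ≤ p + q :=
  abs_le.2 ⟨by linarith, by linarith⟩

lemma master (Q : ℝ → Matrix (Fin n) (Fin n) ℝ)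
    (hQ_cont : Continuous Q)
    (hQ_per : ∀ t, Q (t + 1) = Q t)
    (hcol : ∀ t j, ∑ i, Q t i j = 0)
    (hoff : ∀ t i j, i ≠ j → 0 ≤ Q t i j)
    (t₀ t₁ : ℝ) (ht₀ : 0 ≤ t₀) (ht : t₀ < t₁) (ht₁ : t₁ ≤ 1)
    (c : ℝ) (hc : 0 < c)
    (hsub : ∀ t ∈ Set.Ioo t₀ t₁, ∀ j : Fin n, c ≤ Q t j (j - 1))
    (hn2 : 2 ≤ n) :
    ∃ π : ℝ → Fin n → ℝ,
      (∀ t, HasDerivAt π (Q t *ᵥ π t) t) ∧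
      (∀ t, π (t + 1) = π t) ∧
      (∀ t, (∀ i, 0 ≤ π t i) ∧ (∑ i, π t i) = 1) ∧
      (∀ π' : ℝ → Fin n → ℝ,
        (∀ t, HasDerivAt π' (Q t *ᵥ π' t) t) →
        (∀ t, π' (t + 1) = π' t) →
        (∀ t, (∀ i, 0 ≤ π' t i) ∧ (∑ i, π' t i) = 1) →
        π' = π) ∧
      ∀ v : ℝ → Fin n → ℝ,
        (∀ t, HasDerivAt v (Q t *ᵥ v t) t) →
        (∀ i, 0 ≤ v 0 i) → (∑ i, v 0 i) = 1 →
        ∃ C > 0, ∃ α > 0, ∀ t ≥ (0:ℝ),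
          (∑ i, |v t i - π t i|) ≤ C * Real.exp (-α * t) := by
  obtain ⟨K, hK1, hK, hb⟩ := exists_bound hQ_cont hQ_per
  obtain ⟨δ₀, hδ₀, hDoe⟩ := doeblin K hK hQ_cont hcol hoff hb ht₀ ht ht₁ hc hsub hn2
  have hnpos : 0 < (n:ℝ) := by positivity
  set δ : ℝ := min δ₀ (1/(2*(n:ℝ))) with hδdef
  have hδpos : 0 < δ := lt_min hδ₀ (by positivity)
  have hδle : δ ≤ 1/(2*(n:ℝ)) := min_le_right _ _
  have hδ0le : δ ≤ δ₀ := min_le_left _ _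
  set ρ : ℝ := 1 - (n:ℝ)*δ with hρdef
  have hρ1 : ρ < 1 := by rw [hρdef]; nlinarith
  have hρhalf : 1/2 ≤ ρ := by
    rw [hρdef]
    have : (n:ℝ)*δ ≤ (n:ℝ)*(1/(2*(n:ℝ))) := mul_le_mul_of_nonneg_left hδle hnpos.le
    rw [show (n:ℝ)*(1/(2*(n:ℝ))) = 1/2 by field_simp] at this
    linarith
  have hρ0 : 0 < ρ := lt_of_lt_of_le (by norm_num) hρhalf
  -- solution operator
  have hex : ∀ x : Fin n → ℝ, ∃ f : ℝ → Fin n → ℝ, f 0 = x ∧ IsSol Q f :=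
    fun x => exists_sol K hK hQ_cont 0 x
  choose sol hsol0 hsolD using hex
  set P : (Fin n → ℝ) → Fin n → ℝ := fun x => sol x 1 with hPdef
  have hchar : ∀ f : ℝ → Fin n → ℝ, IsSol Q f → f = sol (f 0) := fun f hf =>
    sol_unique K hK hf (hsolD (f 0)) (by rw [hsol0])
  -- integer shifts of solutions
  have hshiftk : ∀ (k : ℕ) (f : ℝ → Fin n → ℝ), IsSol Q f →
      IsSol Q (fun t => f (t + (k:ℝ))) := by
    intro k f hf t
    have h1 : HasDerivAt (fun t => f (t + (k:ℝ))) (Q (t+(k:ℝ)) *ᵥ f (t+(k:ℝ))) t :=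
      HasDerivAt.comp_add_const t (k:ℝ) (hf (t+(k:ℝ)))
    have h2 : Q (t + (k:ℝ)) = Q t := by
      have := per_int hQ_per (k:ℤ) t
      rwa [show (((k:ℤ)):ℝ) = (k:ℝ) by push_cast; ring] at this
    rwa [h2] at h1
  have hstepk : ∀ (f : ℝ → Fin n → ℝ), IsSol Q f → ∀ k : ℕ, f ((k:ℝ) + 1) = P (f (k:ℝ)) := by
    intro f hf k
    have hg := hshiftk k f hf
    have heq : (fun t => f (t + (k:ℝ))) = sol (f (k:ℝ)) :=
      sol_unique K hK hg (hsolD _) (s := 0) (by simp [hsol0])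
    have h1 := congrFun heq 1
    rw [show (k:ℝ) + 1 = 1 + (k:ℝ) by ring]
    exact h1
  -- linearity of P
  have hPadd : ∀ x y, P (x + y) = P x + P y := by
    intro x y
    have hg : IsSol Q (fun t => sol x t + sol y t) := by
      intro t
      have := (hsolD x t).add (hsolD y t)
      rwa [← Matrix.mulVec_add] at this
    have heq : (fun t => sol x t + sol y t) = sol (x + y) :=
      sol_unique K hK hg (hsolD _) (s := 0) (by simp [hsol0])
    have h1 := congrFun heq 1
    show sol (x + y) 1 = sol x 1 + sol y 1
    rw [← h1]
  have hPsmul : ∀ (a : ℝ) x, P (a • x) = a • P x := by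
    intro a x
    have hg : IsSol Q (fun t => a • sol x t) := by
      intro t
      have := (hsolD x t).const_smul a
      rwa [← Matrix.mulVec_smul] at this
    have heq : (fun t => a • sol x t) = sol (a • x) :=
      sol_unique K hK hg (hsolD _) (s := 0) (by simp [hsol0])
    have h1 := congrFun heq 1
    show sol (a • x) 1 = a • sol x 1
    rw [← h1]
  have hPsub : ∀ x y, P (x - y) = P x - P y := by
    intro x y
    have h1 : x - y = x + (-1 : ℝ) • y := by
      funext i
      simp only [Pi.sub_apply, Pi.add_apply, Pi.smul_apply, smul_eq_mul]
      ring
    rw [h1, hPadd, hPsmul]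
    funext i
    simp only [Pi.sub_apply, Pi.add_apply, Pi.smul_apply, smul_eq_mul]
    ring
  -- preservation facts
  have hPsum : ∀ x, ∑ i, P x i = ∑ i, x i := by
    intro x
    have := sum_const hcol (hsolD x) 1 0
    rwa [hsol0] at this
  have hPnonneg : ∀ x, (∀ i, 0 ≤ x i) → ∀ i, 0 ≤ P x i := by
    intro x hx
    exact nonneg_inv K hK hQ_cont hoff hb (hsolD x) zero_le_one
      (by rw [hsol0]; exact hx)
  have hPdoe : ∀ x, (∀ i, 0 ≤ x i) → (∑ i, x i) = 1 → ∀ j, δ ≤ P x j := by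
    intro x hx hs j
    exact le_trans hδ0le (hDoe (sol x) (hsolD x) (by rw [hsol0]; exact hx)
      (by rw [hsol0]; exact hs) j)
  -- l1 norm
  set l1 : (Fin n → ℝ) → ℝ := fun x => ∑ i, |x i| with hl1
  have hl1nn : ∀ x, 0 ≤ l1 x := fun x => Finset.sum_nonneg fun i _ => abs_nonneg _
  have hl1zero : ∀ x, l1 x = 0 → x = 0 := by
    intro x hx
    funext i
    have := (Finset.sum_eq_zero_iff_of_nonneg (fun i _ => abs_nonneg (x i))).1 hx i
      (Finset.mem_univ i)
    simpa using this
  have hnorm_le_l1 : ∀ x : Fin n → ℝ, ‖x‖ ≤ l1 x := by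
    intro x
    refine pi_norm_le_iff_of_nonneg (hl1nn x) |>.2 fun i => ?_
    rw [Real.norm_eq_abs]
    exact Finset.single_le_sum (f := fun i => |x i|) (fun i _ => abs_nonneg _)
      (Finset.mem_univ i)
  have hl1_le_norm : ∀ x : Fin n → ℝ, l1 x ≤ (n:ℝ) * ‖x‖ := by
    intro x
    calc l1 x ≤ ∑ _i : Fin n, ‖x‖ := by
          refine Finset.sum_le_sum fun i _ => ?_
          rw [← Real.norm_eq_abs]
          exact norm_le_pi_norm x i
      _ = (n:ℝ) * ‖x‖ := by
          rw [Finset.sum_const, Finset.card_univ, Fintype.card_fin, nsmul_eq_mul]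
  -- contraction
  have hcontract : ∀ x : Fin n → ℝ, (∑ i, x i) = 0 → l1 (P x) ≤ ρ * l1 x := by
    intro x hx
    set xp : Fin n → ℝ := fun i => max (x i) 0 with hxp
    set xm : Fin n → ℝ := fun i => max (-x i) 0 with hxm
    have hxpnn : ∀ i, 0 ≤ xp i := fun i => le_max_right _ _
    have hxmnn : ∀ i, 0 ≤ xm i := fun i => le_max_right _ _
    have habs : ∀ i, |x i| = xp i + xm i := by
      intro i
      rcases le_total (x i) 0 with h | h
      · rw [abs_of_nonpos h]
        have e1 : xp i = 0 := max_eq_right h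
        have e2 : xm i = -x i := max_eq_left (by linarith)
        rw [e1, e2]; ring
      · rw [abs_of_nonneg h]
        have e1 : xp i = x i := max_eq_left h
        have e2 : xm i = 0 := max_eq_right (by linarith)
        rw [e1, e2]; ring
    have hdiff : ∀ i, x i = xp i - xm i := by
      intro i
      rcases le_total (x i) 0 with h | h
      · have e1 : xp i = 0 := max_eq_right h
        have e2 : xm i = -x i := max_eq_left (by linarith)
        rw [e1, e2]; ring
      · have e1 : xp i = x i := max_eq_left h
        have e2 : xm i = 0 := max_eq_right (by linarith)
        rw [e1, e2]; ring
    have hsumpm : ∑ i, xp i = ∑ i, xm i := by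
      have h1 : ∑ i, (xp i - xm i) = 0 := by
        rw [← hx]
        exact Finset.sum_congr rfl fun i _ => (hdiff i).symm
      rw [Finset.sum_sub_distrib] at h1
      linarith
    set m := ∑ i, xp i with hm
    have hm0 : 0 ≤ m := Finset.sum_nonneg fun i _ => hxpnn i
    have hl1x : l1 x = 2 * m := by
      show (∑ i, |x i|) = 2 * m
      rw [Finset.sum_congr rfl fun i _ => habs i, Finset.sum_add_distrib, ← hsumpm]
      ring
    rcases eq_or_lt_of_le hm0 with hm0' | hm0'
    · -- x = 0
      have hxz : x = 0 := by
        funext i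
        have hp : xp i = 0 :=
          (Finset.sum_eq_zero_iff_of_nonneg (fun i _ => hxpnn i)).1 hm0'.symm i
            (Finset.mem_univ i)
        have hq : xm i = 0 := by
          have h2 : ∑ i, xm i = 0 := by rw [← hsumpm]; exact hm0'.symm
          exact (Finset.sum_eq_zero_iff_of_nonneg (fun i _ => hxmnn i)).1 h2 i
            (Finset.mem_univ i)
        have := hdiff i
        rw [hp, hq] at this
        simpa using this
      have hP0 : P (0 : Fin n → ℝ) = 0 := by
        have h1 := hPsmul 0 0
        rw [zero_smul, zero_smul] at h1
        exact h1
      rw [hxz, hP0]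
      have : l1 (0 : Fin n → ℝ) = 0 := by
        show (∑ i, |(0 : Fin n → ℝ) i|) = 0
        simp
      rw [this]
      nlinarith
    · -- m > 0
      have hmne : m ≠ 0 := ne_of_gt hm0'
      set u : Fin n → ℝ := m⁻¹ • xp with hu
      set w : Fin n → ℝ := m⁻¹ • xm with hw
      have hunn : ∀ i, 0 ≤ u i := fun i =>
        mul_nonneg (inv_nonneg.2 hm0) (hxpnn i)
      have hwnn : ∀ i, 0 ≤ w i := fun i =>
        mul_nonneg (inv_nonneg.2 hm0) (hxmnn i)
      have husum : ∑ i, u i = 1 := by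
        show (∑ i, m⁻¹ * xp i) = 1
        rw [← Finset.mul_sum, ← hm, inv_mul_cancel₀ hmne]
      have hwsum : ∑ i, w i = 1 := by
        show (∑ i, m⁻¹ * xm i) = 1
        rw [← Finset.mul_sum, ← hsumpm, inv_mul_cancel₀ hmne]
      have hux : x = m • u - m • w := by
        funext i
        simp only [Pi.sub_apply, Pi.smul_apply, smul_eq_mul]
        rw [hdiff i]
        show xp i - xm i = m * (m⁻¹ * xp i) - m * (m⁻¹ * xm i)
        rw [← mul_assoc, mul_inv_cancel₀ hmne, one_mul, ← mul_assoc,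
          mul_inv_cancel₀ hmne, one_mul]
      have hPu := hPdoe u hunn husum
      have hPw := hPdoe w hwnn hwsum
      have hPusum : ∑ i, P u i = 1 := by rw [hPsum, husum]
      have hPwsum : ∑ i, P w i = 1 := by rw [hPsum, hwsum]
      have hPx : P x = m • P u - m • P w := by
        rw [hux, hPsub, hPsmul m u, hPsmul m w]
      have hper : ∀ i, |P x i| ≤ m * ((P u i - δ) + (P w i - δ)) := by
        intro i
        have h1 : |P u i - P w i| ≤ (P u i - δ) + (P w i - δ) := by
          have h2 := abs_sub_le_add (p := P u i - δ) (q := P w i - δ)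
            (by linarith [hPu i]) (by linarith [hPw i])
          rwa [show (P u i - δ) - (P w i - δ) = P u i - P w i by ring] at h2
        calc |P x i| = |m * P u i - m * P w i| := by
              rw [hPx]; simp only [Pi.sub_apply, Pi.smul_apply, smul_eq_mul]
          _ = m * |P u i - P w i| := by
              rw [← mul_sub, abs_mul, abs_of_nonneg hm0]
          _ ≤ m * ((P u i - δ) + (P w i - δ)) := mul_le_mul_of_nonneg_left h1 hm0
      have hsum1 : ∑ i : Fin n, ((P u i - δ) + (P w i - δ)) = 2 - 2*(n:ℝ)*δ := by
        rw [Finset.sum_add_distrib, Finset.sum_sub_distrib, Finset.sum_sub_distrib,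
          hPusum, hPwsum, Finset.sum_const, Finset.card_univ, Fintype.card_fin,
          nsmul_eq_mul]
        ring
      calc l1 (P x) ≤ ∑ i, m * ((P u i - δ) + (P w i - δ)) :=
            Finset.sum_le_sum fun i _ => hper i
        _ = m * (2 - 2*(n:ℝ)*δ) := by rw [← Finset.mul_sum, hsum1]
        _ = ρ * (2 * m) := by rw [hρdef]; ring
        _ = ρ * l1 x := by rw [hl1x]
  -- fixed point
  obtain ⟨π₀, hπ₀P, hπ₀nn, hπ₀sum⟩ :
      ∃ π₀ : Fin n → ℝ, P π₀ = π₀ ∧ (∀ i, 0 ≤ π₀ i) ∧ (∑ i, π₀ i) = 1 := by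
    set u0 : Fin n → ℝ := fun _ => 1/(n:ℝ) with hu0
    set xs : ℕ → Fin n → ℝ := fun mi => P^[mi] u0 with hxs
    have hxs0 : xs 0 = u0 := rfl
    have hxsS : ∀ mi, xs (mi+1) = P (xs mi) := by
      intro mi
      show P^[mi+1] u0 = P (P^[mi] u0)
      rw [Function.iterate_succ_apply']
    have hprob : ∀ mi, (∀ i, 0 ≤ xs mi i) ∧ (∑ i, xs mi i) = 1 := by
      intro mi
      induction mi with
      | zero =>
        constructor
        · intro i; rw [hxs0]; positivity
        · rw [hxs0]
          show (∑ _i : Fin n, 1/(n:ℝ)) = 1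
          rw [Finset.sum_const, Finset.card_univ, Fintype.card_fin, nsmul_eq_mul]
          field_simp
      | succ mi ih =>
        rw [hxsS]
        exact ⟨hPnonneg _ ih.1, by rw [hPsum, ih.2]⟩
    set D := l1 (xs 1 - xs 0) with hD
    have hDnn : 0 ≤ D := hl1nn _
    have hgeo : ∀ mi, l1 (xs (mi+1) - xs mi) ≤ ρ^mi * D := by
      intro mi
      induction mi with
      | zero => rw [pow_zero, one_mul]
      | succ mi ih =>
        have hzero : ∑ i, (xs (mi+1) - xs mi) i = 0 := by
          simp only [Pi.sub_apply]
          rw [Finset.sum_sub_distrib, (hprob _).2, (hprob _).2, sub_self]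
        have h1 : xs (mi+2) - xs (mi+1) = P (xs (mi+1) - xs mi) := by
          rw [hPsub, ← hxsS, ← hxsS]
        calc l1 (xs (mi+2) - xs (mi+1)) = l1 (P (xs (mi+1) - xs mi)) := by rw [h1]
          _ ≤ ρ * l1 (xs (mi+1) - xs mi) := hcontract _ hzero
          _ ≤ ρ * (ρ^mi * D) := mul_le_mul_of_nonneg_left ih hρ0.le
          _ = ρ^(mi+1) * D := by ring
    have hcauchy : CauchySeq xs := by
      apply cauchySeq_of_le_geometric ρ D hρ1
      intro mi
      rw [dist_eq_norm]
      calc ‖xs mi - xs (mi+1)‖ = ‖xs (mi+1) - xs mi‖ := norm_sub_rev _ _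
        _ ≤ l1 (xs (mi+1) - xs mi) := hnorm_le_l1 _
        _ ≤ ρ^mi * D := hgeo mi
        _ = D * ρ^mi := by ring
    obtain ⟨π₀, hπ₀lim⟩ := cauchySeq_tendsto_of_complete hcauchy
    have hPlipz : LipschitzWith (Real.toNNReal (Real.exp ((K:ℝ)))) P := by
      apply LipschitzWith.of_dist_le_mul
      intro x y
      have h1 := gronwall_sol K hK (hsolD x) (hsolD y) (a := 0) (t := 1) zero_le_one
      rw [hsol0, hsol0] at h1
      calc dist (P x) (P y) ≤ dist x y * Real.exp ((K:ℝ)*(1-0)) := h1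
        _ = (Real.toNNReal (Real.exp ((K:ℝ))) : ℝ) * dist x y := by
            rw [Real.coe_toNNReal _ (Real.exp_nonneg _)]
            ring_nf
    have hPcont : Continuous P := hPlipz.continuous
    have h2 : Filter.Tendsto (fun mi => P (xs mi)) Filter.atTop (nhds (P π₀)) :=
      (hPcont.tendsto π₀).comp hπ₀lim
    have h3 : Filter.Tendsto (fun mi => xs (mi+1)) Filter.atTop (nhds π₀) :=
      hπ₀lim.comp (Filter.tendsto_add_atTop_nat 1)
    have h4 : (fun mi => P (xs mi)) = fun mi => xs (mi+1) :=
      funext fun mi => (hxsS mi).symm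
    rw [h4] at h2
    refine ⟨π₀, tendsto_nhds_unique h2 h3, ?_, ?_⟩
    · intro i
      have hcoord : Filter.Tendsto (fun mi => xs mi i) Filter.atTop (nhds (π₀ i)) :=
        ((continuous_apply i).tendsto π₀).comp hπ₀lim
      exact le_of_tendsto_of_tendsto tendsto_const_nhds hcoord
        (Filter.Eventually.of_forall fun mi => (hprob mi).1 i)
    · have hsumt : Filter.Tendsto (fun mi => ∑ i, xs mi i) Filter.atTop
          (nhds (∑ i, π₀ i)) := by
        apply tendsto_finset_sum
        intro i _
        exact ((continuous_apply i).tendsto π₀).comp hπ₀lim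
      have hconst : (fun mi => ∑ i, xs mi i) = fun _ => (1:ℝ) :=
        funext fun mi => (hprob mi).2
      rw [hconst] at hsumt
      exact tendsto_nhds_unique hsumt tendsto_const_nhds
  -- the periodic solution
  set π : ℝ → Fin n → ℝ := sol π₀ with hπdef
  have hπ0 : π 0 = π₀ := hsol0 π₀
  have hπsol : IsSol Q π := hsolD π₀
  have hπper : ∀ t, π (t + 1) = π t := by
    have hg : IsSol Q (fun t => π (t + 1)) := by
      have := hshiftk 1 π hπsol
      simpa using this
    have heq : (fun t => π (t + 1)) = π := by
      refine sol_unique K hK hg hπsol (s := 0) ?_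
      show π (0 + 1) = π 0
      have h1 := hstepk π hπsol 0
      simp only [Nat.cast_zero, zero_add] at h1
      rw [zero_add, h1, hπ0, hπ₀P]
    intro t
    exact congrFun heq t
  have hπperk : ∀ (k : ℕ) (t : ℝ), π (t + (k:ℝ)) = π t := by
    intro k
    induction k with
    | zero => intro t; norm_num
    | succ k ih =>
      intro t
      have h1 : t + ((k+1:ℕ):ℝ) = (t + (k:ℝ)) + 1 := by push_cast; ring
      rw [h1, hπper, ih]
  have hπprob : ∀ t, (∀ i, 0 ≤ π t i) ∧ (∑ i, π t i) = 1 := by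
    intro t
    constructor
    · intro i
      set k : ℕ := Nat.ceil (-t) with hk
      have htk : 0 ≤ t + (k:ℝ) := by
        have := Nat.le_ceil (-t)
        linarith
      have := nonneg_inv K hK hQ_cont hoff hb hπsol htk
        (by rw [hπ0]; exact hπ₀nn) i
      rwa [hπperk k t] at this
    · rw [← hπ₀sum, ← hπ0]
      exact sum_const hcol hπsol t 0
  refine ⟨π, hπsol, hπper, hπprob, ?_, ?_⟩
  · -- uniqueness
    intro π' hπ'sol hπ'per hπ'prob
    have hd0 : ∑ i, (π' 0 - π₀) i = 0 := by
      simp only [Pi.sub_apply]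
      rw [Finset.sum_sub_distrib, (hπ'prob 0).2, hπ₀sum, sub_self]
    have hP1 : π' 1 = P (π' 0) := by
      have := hstepk π' hπ'sol 0
      simpa using this
    have hper0 : π' 1 = π' 0 := by
      have := hπ'per 0
      simpa using this
    have hPd : P (π' 0 - π₀) = π' 0 - π₀ := by
      rw [hPsub, ← hP1, hper0, hπ₀P]
    have hcon := hcontract _ hd0
    rw [hPd] at hcon
    have hl1d : l1 (π' 0 - π₀) = 0 := by
      nlinarith [hl1nn (π' 0 - π₀)]
    have hdz := hl1zero _ hl1d
    have hmatch : π' 0 = π₀ := by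
      funext i
      have := congrFun hdz i
      simp only [Pi.sub_apply, Pi.zero_apply] at this
      linarith
    have hfin := hchar π' hπ'sol
    rw [hmatch] at hfin
    exact hfin
  · -- convergence
    intro v hvsol hv0nn hv0sum
    set α : ℝ := -Real.log ρ with hα
    have hαpos : 0 < α := by
      rw [hα]
      have := Real.log_neg hρ0 hρ1
      linarith
    set W : ℝ := l1 (v 0 - π 0) with hW
    have hWnn : 0 ≤ W := hl1nn _
    set C : ℝ := (n:ℝ) * Real.exp ((K:ℝ)) * Real.exp α * (W + 1) with hC
    have hCpos : 0 < C := by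
      rw [hC]
      have h1 : (0:ℝ) < W + 1 := by linarith
      positivity
    refine ⟨C, hCpos, α, hαpos, ?_⟩
    intro t htge
    have hvsum : ∀ s : ℝ, ∑ i, v s i = 1 := fun s => by
      rw [sum_const hcol hvsol s 0, hv0sum]
    have hπsum : ∀ s : ℝ, ∑ i, π s i = 1 := fun s => (hπprob s).2
    have hstepv : ∀ k : ℕ, l1 (v (k:ℝ) - π (k:ℝ)) ≤ ρ^k * W := by
      intro k
      induction k with
      | zero =>
        simp only [Nat.cast_zero, pow_zero, one_mul]
        exact le_of_eq hW.symm
      | succ k ih =>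
        have hz : ∑ i, (v (k:ℝ) - π (k:ℝ)) i = 0 := by
          simp only [Pi.sub_apply]
          rw [Finset.sum_sub_distrib, hvsum, hπsum, sub_self]
        have h1 : v ((k:ℝ)+1) = P (v (k:ℝ)) := hstepk v hvsol k
        have h2 : π ((k:ℝ)+1) = P (π (k:ℝ)) := hstepk π hπsol k
        have h3 : v ((k+1:ℕ):ℝ) - π ((k+1:ℕ):ℝ) = P (v (k:ℝ) - π (k:ℝ)) := by
          push_cast
          rw [h1, h2, hPsub]
        calc l1 (v ((k+1:ℕ):ℝ) - π ((k+1:ℕ):ℝ)) = l1 (P (v (k:ℝ) - π (k:ℝ))) := by rw [h3]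
          _ ≤ ρ * l1 (v (k:ℝ) - π (k:ℝ)) := hcontract _ hz
          _ ≤ ρ * (ρ^k * W) := mul_le_mul_of_nonneg_left ih hρ0.le
          _ = ρ^(k+1) * W := by ring
    set k : ℕ := Nat.floor t with hkfl
    have hk1 : (k:ℝ) ≤ t := Nat.floor_le htge
    have hk2 : t < (k:ℝ) + 1 := Nat.lt_floor_add_one t
    have hgron := gronwall_sol K hK hvsol hπsol (a := (k:ℝ)) (t := t) hk1
    have hexp1 : Real.exp ((K:ℝ)*(t - (k:ℝ))) ≤ Real.exp (K:ℝ) := by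
      apply Real.exp_le_exp.2
      nlinarith [K.coe_nonneg]
    have hd1 : dist (v t) (π t) ≤ dist (v (k:ℝ)) (π (k:ℝ)) * Real.exp (K:ℝ) :=
      le_trans hgron (mul_le_mul_of_nonneg_left hexp1 dist_nonneg)
    have hd2 : dist (v (k:ℝ)) (π (k:ℝ)) ≤ l1 (v (k:ℝ) - π (k:ℝ)) := by
      rw [dist_eq_norm]
      exact hnorm_le_l1 _
    have hmain : l1 (v t - π t) ≤ (n:ℝ) * Real.exp (K:ℝ) * (ρ^k * W) := by
      calc l1 (v t - π t) ≤ (n:ℝ) * ‖v t - π t‖ := hl1_le_norm _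
        _ = (n:ℝ) * dist (v t) (π t) := by rw [dist_eq_norm]
        _ ≤ (n:ℝ) * (dist (v (k:ℝ)) (π (k:ℝ)) * Real.exp (K:ℝ)) :=
            mul_le_mul_of_nonneg_left hd1 hnpos.le
        _ ≤ (n:ℝ) * (l1 (v (k:ℝ) - π (k:ℝ)) * Real.exp (K:ℝ)) :=
            mul_le_mul_of_nonneg_left
              (mul_le_mul_of_nonneg_right hd2 (Real.exp_nonneg _)) hnpos.le
        _ ≤ (n:ℝ) * ((ρ^k * W) * Real.exp (K:ℝ)) :=
            mul_le_mul_of_nonneg_left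
              (mul_le_mul_of_nonneg_right (hstepv k) (Real.exp_nonneg _)) hnpos.le
        _ = (n:ℝ) * Real.exp (K:ℝ) * (ρ^k * W) := by ring
    have hρk : ρ^k ≤ Real.exp α * Real.exp (-α * t) := by
      have h1 : ρ^k = Real.exp ((k:ℝ) * Real.log ρ) := by
        rw [Real.exp_nat_mul, Real.exp_log hρ0]
      rw [h1, ← Real.exp_add]
      apply Real.exp_le_exp.2
      have hlog : Real.log ρ = -α := by rw [hα]; ring
      rw [hlog]
      nlinarith
    have hfinal : (n:ℝ) * Real.exp (K:ℝ) * (ρ^k * W) ≤ C * Real.exp (-α * t) := by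
      calc (n:ℝ) * Real.exp (K:ℝ) * (ρ^k * W)
          ≤ (n:ℝ) * Real.exp (K:ℝ) * ((Real.exp α * Real.exp (-α*t)) * W) :=
            mul_le_mul_of_nonneg_left (mul_le_mul_of_nonneg_right hρk hWnn)
              (by positivity)
        _ ≤ (n:ℝ) * Real.exp (K:ℝ) * ((Real.exp α * Real.exp (-α*t)) * (W+1)) :=
            mul_le_mul_of_nonneg_left
              (mul_le_mul_of_nonneg_left (by linarith) (by positivity)) (by positivity)
        _ = C * Real.exp (-α*t) := by rw [hC]; ring
    have hrw : (∑ i, |v t i - π t i|) = l1 (v t - π t) := rfl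
    rw [hrw]
    exact le_trans hmain hfinal

end Master

end PGA2

theorem periodic_generator_unique_attracting_periodic_solution
    (n : ℕ) [NeZero n]
    (Q : ℝ → Matrix (Fin n) (Fin n) ℝ)
    (hQ_cont : Continuous Q)
    (hQ_per : ∀ t, Q (t + 1) = Q t)
    (hcol : ∀ t j, ∑ i, Q t i j = 0)
    (hoff : ∀ t i j, i ≠ j → 0 ≤ Q t i j)
    (t₀ t₁ : ℝ) (ht₀ : 0 ≤ t₀) (ht : t₀ < t₁) (ht₁ : t₁ ≤ 1)
    (c : ℝ) (hc : 0 < c)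
    (hsub : ∀ t ∈ Set.Ioo t₀ t₁, ∀ j : Fin n, c ≤ Q t j (j - 1)) :
    ∃ π : ℝ → Fin n → ℝ,
      (∀ t, HasDerivAt π (Q t *ᵥ π t) t) ∧
      (∀ t, π (t + 1) = π t) ∧
      (∀ t, (∀ i, 0 ≤ π t i) ∧ (∑ i, π t i) = 1) ∧
      (∀ π' : ℝ → Fin n → ℝ,
        (∀ t, HasDerivAt π' (Q t *ᵥ π' t) t) →
        (∀ t, π' (t + 1) = π' t) →
        (∀ t, (∀ i, 0 ≤ π' t i) ∧ (∑ i, π' t i) = 1) →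
        π' = π) ∧
      ∀ v : ℝ → Fin n → ℝ,
        (∀ t, HasDerivAt v (Q t *ᵥ v t) t) →
        (∀ i, 0 ≤ v 0 i) → (∑ i, v 0 i) = 1 →
        ∃ C > 0, ∃ α > 0, ∀ t ≥ (0:ℝ),
          (∑ i, |v t i - π t i|) ≤ C * Real.exp (-α * t) := by
  rcases le_or_gt 2 n with hn2 | hn1
  · exact PGA2.master Q hQ_cont hQ_per hcol hoff t₀ t₁ ht₀ ht ht₁ c hc hsub hn2
  · exfalso
    have hn0 : n ≠ 0 := NeZero.ne n
    have hn : n = 1 := by omega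
    subst hn
    set tm := (t₀ + t₁)/2 with htm
    have htmm : tm ∈ Set.Ioo t₀ t₁ := ⟨by rw [htm]; linarith, by rw [htm]; linarith⟩
    have h1 := hsub tm htmm 0
    have h2 := hcol tm 0
    have h3 : ∑ i : Fin 1, Q tm i 0 = Q tm 0 0 := by
      rw [Fin.sum_univ_one]
    have h4 : ((0:Fin 1) - 1) = 0 := Subsingleton.elim _ _
    rw [h4] at h1
    rw [h3] at h2
    linarith
end

section
/- Let s : ℝ → ℝ be 1-periodic, nonnegative, continuous with ∫_0^1 s > 0, and let p(x,t) = s(t) e^{-∫_x^t s(u) du} for t ≥ x be the transition density of a neuron without refractory period. Define E(x) = ∫_x^∞ (t-x) p(x,t) dt. Then E is 1-periodic, satisfies E'(x) = -1 + s(x)E(x), and consequently ∫_0^1 s(x) E(x) dx = 1. -/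
open MeasureTheory Set Filter Real Topology

theorem expected_delay_periodic_memoryless
    (s : ℝ → ℝ)
    (hs_per : ∀ t, s (t + 1) = s t)
    (hs_nonneg : ∀ t, 0 ≤ s t)
    (hs_cont : Continuous s)
    (hs_pos : 0 < ∫ u in Set.Ioo (0:ℝ) 1, s u)
    (p : ℝ → ℝ → ℝ)
    (hp : ∀ x t, p x t = s t * Real.exp (-(∫ u in x..t, s u)))
    (E : ℝ → ℝ)
    (hE : ∀ x, E x = ∫ t in Set.Ioi x, (t - x) * p x t) :
    (∀ x, E (x + 1) = E x) ∧
    (∀ x, HasDerivAt E (-1 + s x * E x) x) ∧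
    (∫ x in Set.Ioo (0:ℝ) 1, s x * E x) = 1 := by
  set c : ℝ := ∫ u in Set.Ioo (0:ℝ) 1, s u with hc_def
  set S : ℝ → ℝ := fun x => ∫ u in (0:ℝ)..x, s u with hS_def
  have hSderiv : ∀ x, HasDerivAt S (s x) x := fun x =>
    (hs_cont.integral_hasStrictDerivAt 0 x).hasDerivAt
  have hScont : Continuous S :=
    continuous_iff_continuousAt.2 fun x => (hSderiv x).continuousAt
  have hSsub : ∀ x t, (∫ u in x..t, s u) = S t - S x := by
    intro x t
    have := intervalIntegral.integral_add_adjacent_intervals (μ := volume) (a := 0) (b := x) (c := t)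
      (hs_cont.intervalIntegrable 0 x) (hs_cont.intervalIntegrable x t)
    simp only [hS_def]; linarith
  have hcval : c = ∫ u in (0:ℝ)..1, s u := by
    rw [intervalIntegral.integral_of_le zero_le_one, integral_Ioc_eq_integral_Ioo]
  have hcpos : 0 < c := hs_pos
  have hSadd : ∀ x, S (x + 1) = S x + c := by
    intro x
    have hper : Function.Periodic s 1 := hs_per
    have h1 : (∫ u in x..x+1, s u) = ∫ u in (0:ℝ)..0+1, s u :=
      hper.intervalIntegral_add_eq x 0
    have h2 := hSsub x (x+1)
    rw [h1] at h2
    simp only [zero_add] at h2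
    rw [← hcval] at h2
    linarith
  have hSmono : Monotone S := by
    intro a b hab
    have h := hSsub a b
    have h2 : 0 ≤ ∫ u in a..b, s u :=
      intervalIntegral.integral_nonneg hab fun u _ => hs_nonneg u
    linarith
  have hSnat : ∀ x (n : ℕ), S (x + n) = S x + n * c := by
    intro x n
    induction n with
    | zero => simp
    | succ n ih =>
      have : x + (n+1 : ℕ) = (x + n) + 1 := by push_cast; ring
      rw [this, hSadd, ih]; push_cast; ring
  have hSlow : ∀ x r, x ≤ r → S x + c * (r - x) - c ≤ S r := by
    intro x r hxr
    set n : ℕ := ⌊r - x⌋₊ with hn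
    have h0 : (0:ℝ) ≤ r - x := by linarith
    have h1 : (n:ℝ) ≤ r - x := Nat.floor_le h0
    have h2 : r - x < n + 1 := Nat.lt_floor_add_one _
    have h3 : S (x + n) ≤ S r := hSmono (by linarith)
    rw [hSnat x n] at h3
    nlinarith
  have hqbound : ∀ x r, x ≤ r →
      Real.exp (-S r) ≤ Real.exp (c - S x + c * x) * Real.exp (-(c * r)) := by
    intro x r hxr
    rw [← Real.exp_add]
    apply Real.exp_le_exp.2
    have := hSlow x r hxr
    nlinarith
  have hqcont : Continuous fun r => Real.exp (-S r) := Real.continuous_exp.comp hScont.neg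
  have hq_int : ∀ x, IntegrableOn (fun r => Real.exp (-S r)) (Ioi x) := by
    intro x
    have hgi : IntegrableOn
        (fun r => Real.exp (c - S x + c * x) * Real.exp (-(c * r))) (Ioi x) := by
      have := exp_neg_integrableOn_Ioi x hcpos
      simpa [neg_mul, IntegrableOn] using this.const_mul (Real.exp (c - S x + c * x))
    refine Integrable.mono hgi (hqcont.aestronglyMeasurable.restrict) ?_
    refine (ae_restrict_iff' measurableSet_Ioi).2 (ae_of_all _ fun r hr => ?_)
    rw [Real.norm_eq_abs, Real.norm_eq_abs, abs_of_nonneg (Real.exp_pos _).le,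
      abs_of_nonneg (by positivity)]
    exact hqbound x r hr.le
  set G : ℝ → ℝ := fun x => ∫ r in Ioi x, Real.exp (-S r) with hG_def
  have hGtend : ∀ x, Tendsto (fun y => ∫ r in x..y, Real.exp (-S r)) atTop (𝓝 (G x)) :=
    fun x => intervalIntegral_tendsto_integral_Ioi x (hq_int x) tendsto_id
  have hmulexp : Tendsto (fun y : ℝ => y * Real.exp (-(c*y))) atTop (𝓝 0) := by
    have h := Real.tendsto_pow_mul_exp_neg_atTop_nhds_zero 1
    have h2 : Tendsto (fun y : ℝ => c * y) atTop atTop :=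
      Filter.tendsto_id.const_mul_atTop hcpos
    have h4 : Tendsto (fun y : ℝ => c⁻¹ * ((c*y)^1 * Real.exp (-(c*y)))) atTop (𝓝 (c⁻¹ * 0)) :=
      (h.comp h2).const_mul _
    rw [mul_zero] at h4
    refine h4.congr fun y => ?_
    rw [pow_one, ← mul_assoc, ← mul_assoc, inv_mul_cancel₀ hcpos.ne', one_mul]
  have hexp0 : Tendsto (fun y : ℝ => Real.exp (-(c*y))) atTop (𝓝 0) := by
    have h2 : Tendsto (fun y : ℝ => c * y) atTop atTop :=
      Filter.tendsto_id.const_mul_atTop hcpos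
    exact (Real.tendsto_exp_neg_atTop_nhds_zero).comp h2
  have htail : ∀ x, Tendsto (fun y => (y - x) * Real.exp (-S y)) atTop (𝓝 0) := by
    intro x
    have hup : Tendsto
        (fun y : ℝ => Real.exp (c - S x + c * x) * ((y - x) * Real.exp (-(c*y))))
        atTop (𝓝 (Real.exp (c - S x + c * x) * 0)) := by
      apply Tendsto.const_mul
      have h5 : Tendsto (fun y : ℝ => y * Real.exp (-(c*y)) - x * Real.exp (-(c*y)))
          atTop (𝓝 (0 - x * 0)) := hmulexp.sub (hexp0.const_mul x)
      simpa [sub_mul] using h5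
    rw [mul_zero] at hup
    apply squeeze_zero'
      (g := fun y => Real.exp (c - S x + c * x) * ((y - x) * Real.exp (-(c*y))))
    · filter_upwards [eventually_ge_atTop x] with y hy
      exact mul_nonneg (by linarith) (Real.exp_pos _).le
    · filter_upwards [eventually_ge_atTop x] with y hy
      have h6 := hqbound x y hy
      have h7 : (0:ℝ) ≤ y - x := by linarith
      calc (y - x) * Real.exp (-S y)
          ≤ (y - x) * (Real.exp (c - S x + c * x) * Real.exp (-(c*y))) :=
            mul_le_mul_of_nonneg_left h6 h7
        _ = Real.exp (c - S x + c * x) * ((y - x) * Real.exp (-(c*y))) := by ring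
    · exact hup
  -- the explicit integrand
  set F : ℝ → ℝ → ℝ := fun x t => (t - x) * (s t * (Real.exp (S x) * Real.exp (-S t)))
    with hF_def
  have hpF : ∀ x t, (t - x) * p x t = F x t := by
    intro x t
    rw [hp x t, hSsub x t, neg_sub]
    simp only [hF_def]
    rw [Real.exp_sub, Real.exp_neg]
    ring
  have hFcont : ∀ x, Continuous (F x) := by
    intro x
    exact ((continuous_id.sub continuous_const).mul
      (hs_cont.mul (continuous_const.mul hqcont)))
  -- FTC on intervals
  have hFTC : ∀ x y, (∫ t in x..y, F x t)
      = Real.exp (S x) * (∫ t in x..y, Real.exp (-S t))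
        - (y - x) * (Real.exp (S x) * Real.exp (-S y)) := by
    intro x y
    have hg : ∀ t, HasDerivAt (fun t => -((t - x) * (Real.exp (S x) * Real.exp (-S t))))
        (F x t - Real.exp (S x) * Real.exp (-S t)) t := by
      intro t
      have h1 : HasDerivAt (fun t : ℝ => t - x) 1 t := (hasDerivAt_id t).sub_const x
      have h2 : HasDerivAt (fun t => Real.exp (-S t)) (-s t * Real.exp (-S t)) t := by
        have := ((hSderiv t).neg).exp
        simpa [mul_comm] using this
      have h3 := (h1.mul (h2.const_mul (Real.exp (S x)))).neg
      refine h3.congr_deriv ?_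
      rw [hF_def]
      ring
    have hcontd : Continuous fun t => F x t - Real.exp (S x) * Real.exp (-S t) :=
      (hFcont x).sub (continuous_const.mul hqcont)
    have h4 := intervalIntegral.integral_eq_sub_of_hasDerivAt (a := x) (b := y)
      (fun t _ => hg t) (hcontd.intervalIntegrable x y)
    rw [intervalIntegral.integral_sub (f := F x) (g := fun t => Real.exp (S x) * Real.exp (-S t))
      ((hFcont x).intervalIntegrable x y)
      ((continuous_const.mul hqcont).intervalIntegrable x y)] at h4
    rw [intervalIntegral.integral_const_mul] at h4
    simp only [sub_self, mul_zero, neg_zero, sub_zero] at h4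
    linarith [h4]
  -- limit of interval integrals of F x
  have hFtend : ∀ x, Tendsto (fun y => ∫ t in x..y, F x t) atTop
      (𝓝 (Real.exp (S x) * G x)) := by
    intro x
    have h1 : Tendsto (fun y => Real.exp (S x) * (∫ t in x..y, Real.exp (-S t)))
        atTop (𝓝 (Real.exp (S x) * G x)) := (hGtend x).const_mul _
    have h2 : Tendsto (fun y => (y - x) * (Real.exp (S x) * Real.exp (-S y))) atTop (𝓝 0) := by
      have := (htail x).const_mul (Real.exp (S x))
      rw [mul_zero] at this
      refine this.congr fun y => by ring
    have h3 := h1.sub h2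
    rw [sub_zero] at h3
    exact h3.congr fun y => (hFTC x y).symm
  have hF_int : ∀ x, IntegrableOn (F x) (Ioi x) := by
    intro x
    refine integrableOn_Ioi_of_intervalIntegral_norm_tendsto (Real.exp (S x) * G x) x
      (fun y => ((hFcont x).integrableOn_Ioc)) tendsto_id ?_
    refine ((hFtend x).congr' ?_)
    filter_upwards [eventually_ge_atTop x] with y hy
    simp only [id_eq]
    rw [intervalIntegral.integral_of_le hy, intervalIntegral.integral_of_le hy]
    refine setIntegral_congr_fun measurableSet_Ioc fun t ht => ?_
    rw [Real.norm_eq_abs, abs_of_nonneg]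
    simp only [hF_def]
    exact mul_nonneg (by linarith [ht.1]) (mul_nonneg (hs_nonneg t) (by positivity))
  have hErep : ∀ x, E x = Real.exp (S x) * G x := by
    intro x
    rw [hE x]
    have h0 : (∫ t in Ioi x, (t - x) * p x t) = ∫ t in Ioi x, F x t := by
      refine setIntegral_congr_fun measurableSet_Ioi fun t _ => hpF x t
    rw [h0]
    exact tendsto_nhds_unique
      (intervalIntegral_tendsto_integral_Ioi x (hF_int x) tendsto_id) (hFtend x)
  -- derivative of G
  have hGsplit : ∀ a b, a ≤ b → G a = (∫ r in a..b, Real.exp (-S r)) + G b := by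
    intro a b hab
    rw [hG_def]
    rw [intervalIntegral.integral_of_le hab,
      ← setIntegral_union (Ioc_disjoint_Ioi le_rfl) measurableSet_Ioi
        ((hq_int a).mono_set Ioc_subset_Ioi_self) (hq_int b),
      Ioc_union_Ioi_eq_Ioi hab]
  have hGeq : ∀ x, G x = G 0 - ∫ r in (0:ℝ)..x, Real.exp (-S r) := by
    intro x
    rcases le_total 0 x with h | h
    · have := hGsplit 0 x h; linarith
    · have := hGsplit x 0 h
      rw [intervalIntegral.integral_symm] at this
      linarith
  have hGderiv : ∀ x, HasDerivAt G (-(Real.exp (-S x))) x := by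
    intro x
    have h1 : HasDerivAt (fun x => ∫ r in (0:ℝ)..x, Real.exp (-S r)) (Real.exp (-S x)) x :=
      (hqcont.integral_hasStrictDerivAt 0 x).hasDerivAt
    have h2 := (h1.const_sub (G 0))
    refine h2.congr_of_eventuallyEq ?_ |>.congr_deriv (by ring)
    exact Filter.Eventually.of_forall fun y => (hGeq y)
  -- the derivative statement
  have hEderiv : ∀ x, HasDerivAt E (-1 + s x * E x) x := by
    intro x
    have h1 := ((hSderiv x).exp.mul (hGderiv x))
    have h2 : E = fun x => Real.exp (S x) * G x := funext hErep
    rw [h2]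
    refine h1.congr_deriv ?_
    have hx1 : Real.exp (S x) * Real.exp (-S x) = 1 := by
      rw [← Real.exp_add, add_neg_cancel, Real.exp_zero]
    beta_reduce
    linear_combination (-1 : ℝ) * hx1
  -- periodicity
  have hGper : ∀ x, G (x + 1) = Real.exp (-c) * G x := by
    intro x
    have h1 : Tendsto (fun y => ∫ r in (x+1)..(y+1), Real.exp (-S r)) atTop (𝓝 (G (x+1))) :=
      intervalIntegral_tendsto_integral_Ioi (x+1) (hq_int (x+1))
        (tendsto_atTop_add_const_right _ 1 tendsto_id)
    have h2 : ∀ y, (∫ r in (x+1)..(y+1), Real.exp (-S r))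
        = Real.exp (-c) * ∫ r in x..y, Real.exp (-S r) := by
      intro y
      rw [← intervalIntegral.integral_comp_add_right (fun r => Real.exp (-S r)) 1,
        ← intervalIntegral.integral_const_mul]
      refine intervalIntegral.integral_congr fun t _ => ?_
      rw [hSadd t, ← Real.exp_add]
      ring_nf
    have h3 : Tendsto (fun y => Real.exp (-c) * ∫ r in x..y, Real.exp (-S r)) atTop
        (𝓝 (Real.exp (-c) * G x)) := (hGtend x).const_mul _
    exact tendsto_nhds_unique (h1.congr fun y => h2 y) h3
  have hEper : ∀ x, E (x + 1) = E x := by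
    intro x
    rw [hErep, hErep, hSadd, hGper, Real.exp_add, ← Real.exp_add]
    ring_nf
    rw [← Real.exp_add]
    ring_nf
  -- final integral
  have hEcont : Continuous E :=
    continuous_iff_continuousAt.2 fun x => (hEderiv x).continuousAt
  have hdcont : Continuous fun x => -1 + s x * E x :=
    continuous_const.add (hs_cont.mul hEcont)
  have h01 : (∫ x in (0:ℝ)..1, (-1 + s x * E x)) = E 1 - E 0 :=
    intervalIntegral.integral_eq_sub_of_hasDerivAt (fun x _ => hEderiv x)
      (hdcont.intervalIntegrable 0 1)
  have hE10 : E 1 = E 0 := by have := hEper 0; rwa [zero_add] at this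
  have hzero : (∫ x in (0:ℝ)..1, (-1 + s x * E x)) = 0 := by rw [h01, hE10, sub_self]
  have hfin : (∫ x in (0:ℝ)..1, s x * E x) = 1 := by
    have h4 : (∫ x in (0:ℝ)..1, s x * E x)
        = (∫ x in (0:ℝ)..1, (-1 + s x * E x)) + ∫ x in (0:ℝ)..1, (1:ℝ) := by
      rw [← intervalIntegral.integral_add (hdcont.intervalIntegrable 0 1)
        (intervalIntegrable_const)]
      refine intervalIntegral.integral_congr fun t _ => by ring
    rw [h4, hzero, zero_add]
    simp
  refine ⟨hEper, hEderiv, ?_⟩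
  rw [← integral_Ioc_eq_integral_Ioo, ← intervalIntegral.integral_of_le zero_le_one]
  exact hfin
end
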